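/- arXiv:2404.17564 — 4 statements merged into one kernel-verified Lean document; each statement's English description precedes it below -/
import Mathlib

section
/- Let G be a finite connected graph, and A, B linked, disjoint, saturated subsets of V(G) such that N(A ∪ B) is not a clique. Then for every clique K ⊆ N(A ∪ B), both A ∪ K and B ∪ K are monophonically convex. -/
open Classical

variable {V : Type*}

namespace Paper

def mInterval (G : SimpleGraph V) (u v : V) : Set V :=
  {w | ∃ p : G.Walk u v, p.IsPath ∧ p.toSubgraph.IsInduced ∧ w ∈ p.support}

def MConvex (G : SimpleGraph V) (C : Set V) : Prop :=
  ∀ u ∈ C, ∀ v ∈ C, mInterval G u v ⊆ C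

def mHull (G : SimpleGraph V) (X : Set V) : Set V :=
  ⋂₀ {C | MConvex G C ∧ X ⊆ C}

def mIntervalSet (G : SimpleGraph V) (Z : Set V) : Set V :=
  ⋃ u ∈ Z, ⋃ v ∈ Z, mInterval G u v

def Sep (G : SimpleGraph V) (A B : Set V) : Prop :=
  ∃ H : Set V, MConvex G H ∧ MConvex G Hᶜ ∧ A ⊆ H ∧ B ⊆ Hᶜ

def nbhd (G : SimpleGraph V) (X : Set V) : Set V :=
  {v | v ∉ X ∧ ∃ x ∈ X, G.Adj x v}

def cnbhd (G : SimpleGraph V) (X : Set V) : Set V := X ∪ nbhd G X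

def front (G : SimpleGraph V) (X Y : Set V) : Set V := X ∩ cnbhd G Y

def IsClique (G : SimpleGraph V) (K : Set V) : Prop :=
  ∀ u ∈ K, ∀ v ∈ K, u ≠ v → G.Adj u v

def shadow (G : SimpleGraph V) (A B : Set V) : Set V :=
  {v | (mHull G (B ∪ {v}) ∩ A).Nonempty}

def Forbidden (G : SimpleGraph V) (A B X : Set V) : Prop :=
  X ⊆ (A ∪ B)ᶜ ∧ (mHull G X ∩ A).Nonempty ∧ (mHull G X ∩ B).Nonempty

def MFS (G : SimpleGraph V) (A B : Set V) : Set (Set V) :=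
  {X | Forbidden G A B X ∧ ∀ Y, Y ⊂ X → ¬ Forbidden G A B Y}

def presat (G : SimpleGraph V) (A B : Set V) : Set V :=
  mHull G (shadow G A B ∪ ⋃ X ∈ MFS G A B, ⋂ x ∈ X, mHull G (A ∪ {x}))

def Linked (G : SimpleGraph V) (A B : Set V) : Prop :=
  ∃ a ∈ A, ∃ b ∈ B, G.Adj a b

def Saturated (G : SimpleGraph V) (A B : Set V) : Prop :=
  A = presat G A B ∧ B = presat G B A

def IsCompOf (G : SimpleGraph V) (W S : Set V) : Prop :=
  S.Nonempty ∧ S ⊆ W ∧ (G.induce S).Connected ∧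
    ∀ T, S ⊆ T → T ⊆ W → (G.induce T).Connected → T = S

def Eqv (G : SimpleGraph V) (A B : Set V) (u v : V) : Prop :=
  u = v ∨ ∃ L : List (Set V), L ≠ [] ∧
    (∀ S ∈ L, IsCompOf G (cnbhd G (A ∪ B))ᶜ S) ∧
    List.Chain' (fun S T => (nbhd G S ∩ nbhd G T).Nonempty) L ∧
    (∃ S₀ ∈ L.head?, u ∈ cnbhd G S₀) ∧
    (∃ Sₖ ∈ L.getLast?, v ∈ cnbhd G Sₖ)

end Paper

open Paper

namespace Aux

variable {G : SimpleGraph V} {A B C X Y : Set V} {u v w x y z : V}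

lemma subset_mHull : X ⊆ mHull G X := fun x hx C hC => hC.2 hx

lemma mConvex_mHull : MConvex G (mHull G X) := by
  intro u hu v hv w hw
  intro C hC
  exact hC.1 u (hu C hC) v (hv C hC) hw

lemma mHull_subset_of (hC : MConvex G C) (hX : X ⊆ C) : mHull G X ⊆ C :=
  fun _ hw => hw C ⟨hC, hX⟩

lemma mConvex_empty : MConvex G (∅ : Set V) := fun u hu => absurd hu (Set.notMem_empty u)

lemma mHull_empty : mHull G (∅ : Set V) = ∅ :=
  Set.eq_empty_iff_forall_notMem.2 fun x hx =>
    (mHull_subset_of mConvex_empty (subset_refl _) hx)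

lemma mInterval_self : mInterval G u u ⊆ {u} := by
  rintro w ⟨p, hp, _, hw⟩
  rw [(SimpleGraph.Walk.isPath_iff_eq_nil (p := p)).1 hp] at hw
  simpa using hw

lemma mConvex_singleton : MConvex G ({x} : Set V) := by
  intro u hu v hv w hw
  rcases hu with rfl; rcases hv with rfl
  exact mInterval_self hw

lemma mHull_singleton : mHull G ({x} : Set V) = {x} :=
  Set.Subset.antisymm (mHull_subset_of mConvex_singleton (subset_refl _)) subset_mHull

lemma mem_mInterval_symm (h : w ∈ mInterval G u v) : w ∈ mInterval G v u := by
  obtain ⟨p, hp, hind, hw⟩ := h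
  refine ⟨p.reverse, hp.reverse, ?_, ?_⟩
  · rw [SimpleGraph.Walk.toSubgraph_reverse]; exact hind
  · rw [SimpleGraph.Walk.support_reverse]; exact List.mem_reverse.2 hw

lemma edge_mem_of_length_one {r : G.Walk x y} (h : r.length = 1) : s(x, y) ∈ r.edges := by
  cases r with
  | nil => simp at h
  | cons h' r' =>
    have h0 : r'.length = 0 := by simpa using h
    have := SimpleGraph.Walk.eq_of_length_eq_zero h0
    subst this
    simp

lemma chord_shortcut (q : G.Walk u v) (hxy : G.Adj x y)
    (hx : x ∈ q.support) (hy : y ∈ q.support) (he : s(x, y) ∉ q.edges) :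
    ∃ w' : G.Walk u v, w'.length < q.length ∧ ∀ z ∈ w'.support, z ∈ q.support := by
  classical
  set t := q.takeUntil x hx with ht
  set d := q.dropUntil x hx with hd
  have hspec : t.append d = q := q.take_spec hx
  have hysplit : y ∈ t.support ∨ y ∈ d.support := by
    rw [← hspec] at hy
    exact (SimpleGraph.Walk.mem_support_append_iff _ _).1 hy
  have hlen : t.length + d.length = q.length := by
    rw [← hspec, SimpleGraph.Walk.length_append]
  rcases hysplit with hyt | hyd
  · -- y occurs in the first part; shortcut from y to x
    set t' := t.takeUntil y hyt with ht'
    set t2 := t.dropUntil y hyt with ht2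
    have hspec2 : t'.append t2 = t := t.take_spec hyt
    have hlen2 : t'.length + t2.length = t.length := by
      rw [← hspec2, SimpleGraph.Walk.length_append]
    have ht2len : 2 ≤ t2.length := by
      rcases Nat.lt_or_ge t2.length 2 with hlt | hge
      · interval_cases h : t2.length
        · exact absurd (SimpleGraph.Walk.eq_of_length_eq_zero h) hxy.symm.ne
        · exfalso
          apply he
          have : s(y, x) ∈ t2.edges := edge_mem_of_length_one h
          have : s(y, x) ∈ t.edges := SimpleGraph.Walk.edges_dropUntil_subset _ hyt this
          have : s(y, x) ∈ q.edges := SimpleGraph.Walk.edges_takeUntil_subset _ hx this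
          rwa [Sym2.eq_swap] at this
      · exact hge
    refine ⟨t'.append (SimpleGraph.Walk.cons hxy.symm d), ?_, ?_⟩
    · rw [SimpleGraph.Walk.length_append, SimpleGraph.Walk.length_cons]
      omega
    · intro z hz
      rcases (SimpleGraph.Walk.mem_support_append_iff _ _).1 hz with hz1 | hz2
      · exact SimpleGraph.Walk.support_takeUntil_subset _ hx
          (SimpleGraph.Walk.support_takeUntil_subset _ hyt hz1)
      · rcases List.mem_cons.1 (SimpleGraph.Walk.support_cons _ _ ▸ hz2 : z ∈ y :: d.support) with hc | hc
        · exact hc ▸ hy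
        · exact SimpleGraph.Walk.support_dropUntil_subset _ hx hc
  · -- y occurs in the second part; shortcut from x to y
    set d1 := d.takeUntil y hyd with hd1
    set d2 := d.dropUntil y hyd with hd2
    have hspec2 : d1.append d2 = d := d.take_spec hyd
    have hlen2 : d1.length + d2.length = d.length := by
      rw [← hspec2, SimpleGraph.Walk.length_append]
    have hd1len : 2 ≤ d1.length := by
      rcases Nat.lt_or_ge d1.length 2 with hlt | hge
      · interval_cases h : d1.length
        · exact absurd (SimpleGraph.Walk.eq_of_length_eq_zero h) hxy.ne
        · exfalso
          apply he
          have : s(x, y) ∈ d1.edges := edge_mem_of_length_one h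
          have : s(x, y) ∈ d.edges := SimpleGraph.Walk.edges_takeUntil_subset _ hyd this
          exact SimpleGraph.Walk.edges_dropUntil_subset _ hx this
      · exact hge
    refine ⟨t.append (SimpleGraph.Walk.cons hxy d2), ?_, ?_⟩
    · rw [SimpleGraph.Walk.length_append, SimpleGraph.Walk.length_cons]
      omega
    · intro z hz
      rcases (SimpleGraph.Walk.mem_support_append_iff _ _).1 hz with hz1 | hz2
      · exact SimpleGraph.Walk.support_takeUntil_subset _ hx hz1
      · rcases List.mem_cons.1 (SimpleGraph.Walk.support_cons _ _ ▸ hz2 : z ∈ x :: d2.support) with hc | hc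
        · exact hc ▸ hx
        · exact SimpleGraph.Walk.support_dropUntil_subset _ hx
            (SimpleGraph.Walk.support_dropUntil_subset _ hyd hc)


lemma exists_induced_path_subset {S : Set V}
    (h : ∃ w : G.Walk u v, ∀ x ∈ w.support, x ∈ S) :
    ∃ p : G.Walk u v, p.IsPath ∧ p.toSubgraph.IsInduced ∧ ∀ x ∈ p.support, x ∈ S := by
  classical
  have hex : ∃ n, ∃ w : G.Walk u v, w.length = n ∧ ∀ x ∈ w.support, x ∈ S := by
    obtain ⟨w, hw⟩ := h
    exact ⟨w.length, w, rfl, hw⟩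
  obtain ⟨w, hwl, hwS⟩ := Nat.find_spec hex
  have hmin : ∀ w' : G.Walk u v, (∀ x ∈ w'.support, x ∈ S) → Nat.find hex ≤ w'.length := by
    intro w' hS'
    by_contra hlt
    push_neg at hlt
    exact Nat.find_min hex hlt ⟨w', rfl, hS'⟩
  set q := w.bypass with hq
  have hqS : ∀ x ∈ q.support, x ∈ S := fun x hx => hwS x (w.support_bypass_subset hx)
  have hqlen : q.length = Nat.find hex :=
    le_antisymm (hwl ▸ w.length_bypass_le) (hmin q hqS)
  refine ⟨q, w.bypass_isPath, ?_, hqS⟩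
  intro a ha b hb hab
  by_contra hne
  have ha' : a ∈ q.support := (q.mem_verts_toSubgraph).1 ha
  have hb' : b ∈ q.support := (q.mem_verts_toSubgraph).1 hb
  have he : s(a, b) ∉ q.edges := by
    intro he
    exact hne (SimpleGraph.Subgraph.mem_edgeSet.1 ((q.mem_edges_toSubgraph).2 he))
  obtain ⟨w', hw'l, hw'S⟩ := chord_shortcut q hab ha' hb' he
  have := hmin w' (fun x hx => hqS x (hw'S x hx))
  omega

lemma isInduced_of_edges (p : G.Walk u v)
    (h : ∀ a ∈ p.support, ∀ b ∈ p.support, G.Adj a b → s(a, b) ∈ p.edges) :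
    p.toSubgraph.IsInduced := by
  intro a ha b hb hab
  exact SimpleGraph.Subgraph.mem_edgeSet.1 ((p.mem_edges_toSubgraph).2
    (h a ((p.mem_verts_toSubgraph).1 ha) b ((p.mem_verts_toSubgraph).1 hb) hab))

lemma mem_mInterval_path3 {a z x : V} (h1 : G.Adj a z) (h2 : G.Adj z x)
    (h3 : ¬ G.Adj a x) (hax : a ≠ x) : z ∈ mInterval G a x := by
  refine ⟨SimpleGraph.Walk.cons h1 (SimpleGraph.Walk.cons h2 SimpleGraph.Walk.nil), ?_, ?_, by simp⟩
  · rw [SimpleGraph.Walk.isPath_def]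
    simp [h1.ne, h2.ne, hax]
  · apply isInduced_of_edges
    intro c hc d hd hcd
    simp only [SimpleGraph.Walk.support_cons, SimpleGraph.Walk.support_nil,
      List.mem_cons, List.mem_singleton] at hc hd
    simp only [SimpleGraph.Walk.edges_cons, SimpleGraph.Walk.edges_nil,
      List.mem_cons, List.mem_singleton]
    rcases hc with rfl | rfl | rfl | h <;> rcases hd with rfl | rfl | rfl | h' <;>
      first
        | exact absurd hcd (G.irrefl)
        | exact absurd hcd h3
        | exact absurd hcd.symm h3
        | cases h
        | cases h'
        | (simp [Sym2.eq_swap]; done)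
        | (simp_all; done)

lemma mem_mInterval_path4 {a u b w : V} (h1 : G.Adj a u) (h2 : G.Adj u b) (h3 : G.Adj b w)
    (nab : ¬ G.Adj a b) (naw : ¬ G.Adj a w) (nuw : ¬ G.Adj u w)
    (hab : a ≠ b) (haw : a ≠ w) (huw : u ≠ w) : b ∈ mInterval G a w := by
  refine ⟨SimpleGraph.Walk.cons h1 (SimpleGraph.Walk.cons h2
    (SimpleGraph.Walk.cons h3 SimpleGraph.Walk.nil)), ?_, ?_, by simp⟩
  · rw [SimpleGraph.Walk.isPath_def]
    simp [h1.ne, h2.ne, h3.ne, hab, haw, huw]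
  · apply isInduced_of_edges
    intro c hc d hd hcd
    simp only [SimpleGraph.Walk.support_cons, SimpleGraph.Walk.support_nil,
      List.mem_cons, List.mem_singleton] at hc hd
    simp only [SimpleGraph.Walk.edges_cons, SimpleGraph.Walk.edges_nil,
      List.mem_cons, List.mem_singleton]
    rcases hc with rfl | rfl | rfl | rfl | h <;> rcases hd with rfl | rfl | rfl | rfl | h' <;>
      first
        | exact absurd hcd (G.irrefl)
        | exact absurd hcd nab
        | exact absurd hcd.symm nab
        | exact absurd hcd naw
        | exact absurd hcd.symm naw
        | exact absurd hcd nuw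
        | exact absurd hcd.symm nuw
        | cases h
        | cases h'
        | (simp [Sym2.eq_swap]; done)
        | (simp_all; done)

lemma mInterval_adj (hne : u ≠ v) (hadj : G.Adj u v) : mInterval G u v ⊆ {u, v} := by
  rintro w ⟨p, hp, hind, hw⟩
  have hadj' : p.toSubgraph.Adj u v :=
    hind (p.start_mem_verts_toSubgraph) (p.end_mem_verts_toSubgraph) hadj
  have hedge : s(u, v) ∈ p.edges := (p.mem_edges_toSubgraph).1
    (SimpleGraph.Subgraph.mem_edgeSet.2 hadj')
  cases p with
  | nil => exact absurd rfl hne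
  | @cons _ m _ h q =>
    by_cases hmv : m = v
    · subst hmv
      have : q = SimpleGraph.Walk.nil := (SimpleGraph.Walk.isPath_iff_eq_nil (p := q)).1 hp.of_cons
      subst this
      simpa using hw
    · exfalso
      rcases List.mem_cons.1 (SimpleGraph.Walk.edges_cons h q ▸ hedge) with hc | hc
      · rw [Sym2.eq_iff] at hc
        rcases hc with ⟨-, hc⟩ | ⟨hc1, hc2⟩
        · exact hmv hc.symm
        · exact hne hc2.symm
      · exact ((SimpleGraph.Walk.cons_isPath_iff h q).1 hp).2
          (q.fst_mem_support_of_mem_edges hc)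


lemma isInduced_tail {m : V} (h : G.Adj u m) {q : G.Walk m v}
    (hp : (SimpleGraph.Walk.cons h q).IsPath)
    (hi : (SimpleGraph.Walk.cons h q).toSubgraph.IsInduced) : q.toSubgraph.IsInduced := by
  intro a ha b hb hab
  have ha' : a ∈ q.support := (q.mem_verts_toSubgraph).1 ha
  have hb' : b ∈ q.support := (q.mem_verts_toSubgraph).1 hb
  have hmem : (SimpleGraph.Walk.cons h q).toSubgraph.Adj a b := by
    apply hi _ _ hab
    · rw [SimpleGraph.Walk.mem_verts_toSubgraph, SimpleGraph.Walk.support_cons]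
      exact List.mem_cons_of_mem _ ha'
    · rw [SimpleGraph.Walk.mem_verts_toSubgraph, SimpleGraph.Walk.support_cons]
      exact List.mem_cons_of_mem _ hb'
  have hedge : s(a, b) ∈ (SimpleGraph.Walk.cons h q).edges :=
    ((SimpleGraph.Walk.cons h q).mem_edges_toSubgraph).1 (SimpleGraph.Subgraph.mem_edgeSet.2 hmem)
  rcases List.mem_cons.1 (SimpleGraph.Walk.edges_cons h q ▸ hedge) with hc | hc
  · exfalso
    have hu : u ∉ q.support := ((SimpleGraph.Walk.cons_isPath_iff h q).1 hp).2
    rw [Sym2.eq_iff] at hc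
    rcases hc with ⟨rfl, -⟩ | ⟨-, rfl⟩
    · exact hu ha'
    · exact hu hb'
  · exact SimpleGraph.Subgraph.mem_edgeSet.1 ((q.mem_edges_toSubgraph).2 hc)

/-! ### Structural lemmas -/

lemma shadow_subset (hS1 : A = presat G A B) : shadow G A B ⊆ A := by
  conv_rhs => rw [hS1]
  exact fun x hx => subset_mHull (Or.inl hx)

lemma hull_add_disjointB (hS2 : B = presat G B A) {v : V} (hvB : v ∉ B) {w : V}
    (hw : w ∈ mHull G (A ∪ {v})) (hwB : w ∈ B) : False :=
  hvB (shadow_subset hS2 ⟨w, hw, hwB⟩)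

lemma mConvex_of_sat (hS1 : A = presat G A B) : MConvex G A := by
  rw [hS1]; exact mConvex_mHull

lemma adj_front (hG : G.Connected) (hS1 : A = presat G A B)
    {u : V} (huA : u ∉ A) (huB : u ∉ B)
    {au : V} (hau : au ∈ A) (hadj : G.Adj au u)
    {b : V} (hb : b ∈ B) {ab : V} (hab : ab ∈ A) (hadj2 : G.Adj ab b) : G.Adj u b := by
  by_contra hnadj
  have hAconv : MConvex G A := mConvex_of_sat hS1
  obtain ⟨wA, hwA⟩ : ∃ w : G.Walk au ab, ∀ x ∈ w.support, x ∈ A := by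
    obtain ⟨w0⟩ := hG.preconnected au ab
    obtain ⟨p, hp, hind, -⟩ :=
      exists_induced_path_subset (S := (Set.univ : Set V)) ⟨w0, fun x _ => trivial⟩
    exact ⟨p, fun x hx => hAconv au hau ab hab ⟨p, hp, hind, hx⟩⟩
  have hwS : ∀ x ∈ (SimpleGraph.Walk.cons hadj.symm
      (wA.append (SimpleGraph.Walk.cons hadj2 SimpleGraph.Walk.nil))).support,
      x ∈ insert u (A ∪ {b}) := by
    intro x hx
    rw [SimpleGraph.Walk.support_cons] at hx
    rcases List.mem_cons.1 hx with rfl | hx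
    · exact Set.mem_insert _ _
    · rcases (SimpleGraph.Walk.mem_support_append_iff _ _).1 hx with hx | hx
      · exact Set.mem_insert_of_mem _ (Or.inl (hwA _ hx))
      · rw [SimpleGraph.Walk.support_cons] at hx
        rcases List.mem_cons.1 hx with rfl | hx
        · exact Set.mem_insert_of_mem _ (Or.inl hab)
        · rw [SimpleGraph.Walk.support_nil, List.mem_singleton] at hx
          exact hx ▸ Set.mem_insert_of_mem _ (Or.inr rfl)
  obtain ⟨p, hp, hind, hpS⟩ := exists_induced_path_subset ⟨_, hwS⟩
  have hhull : ∀ x ∈ p.support, x ∈ mHull G (B ∪ {u}) := fun x hx =>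
    mConvex_mHull u (subset_mHull (Or.inr rfl)) b (subset_mHull (Or.inl hb)) ⟨p, hp, hind, hx⟩
  have hnotA : ∀ x ∈ p.support, x ∉ A := fun x hx hxA =>
    huA (shadow_subset hS1 ⟨x, hhull x hx, hxA⟩)
  cases p with
  | nil => exact huB hb
  | @cons _ m _ h q =>
    have hm : m ∈ insert u (A ∪ {b}) := by
      apply hpS
      rw [SimpleGraph.Walk.support_cons]
      exact List.mem_cons_of_mem _ q.start_mem_support
    have hmA : m ∉ A := by
      apply hnotA
      rw [SimpleGraph.Walk.support_cons]
      exact List.mem_cons_of_mem _ q.start_mem_support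
    rcases hm with rfl | hm
    · exact h.ne rfl
    · rcases hm with hm | rfl
      · exact hmA hm
      · exact hnadj h

lemma exists_nbrs (hG : G.Connected) (hS1 : A = presat G A B) (hS2 : B = presat G B A)
    {a0 b0 : V} (ha0 : a0 ∈ A) (hb0 : b0 ∈ B) (h0 : G.Adj a0 b0)
    {u : V} (hu : u ∈ nbhd G (A ∪ B)) :
    (∃ a ∈ A, G.Adj u a) ∧ (∃ b ∈ B, G.Adj u b) := by
  obtain ⟨huAB, x, hxAB, hxu⟩ := hu
  have huA : u ∉ A := fun h => huAB (Or.inl h)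
  have huB : u ∉ B := fun h => huAB (Or.inr h)
  rcases hxAB with hxA | hxB
  · exact ⟨⟨x, hxA, hxu.symm⟩,
      ⟨b0, hb0, adj_front hG hS1 huA huB hxA hxu hb0 ha0 h0⟩⟩
  · exact ⟨⟨a0, ha0, adj_front hG hS2 huB huA hxB hxu ha0 hb0 h0.symm⟩,
      ⟨x, hxB, hxu.symm⟩⟩

lemma adj_front_A (hG : G.Connected) (hS1 : A = presat G A B) (hS2 : B = presat G B A)
    {a0 b0 : V} (ha0 : a0 ∈ A) (hb0 : b0 ∈ B) (h0 : G.Adj a0 b0)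
    {u : V} (hu : u ∈ nbhd G (A ∪ B))
    {a : V} (ha : a ∈ A) {b' : V} (hb' : b' ∈ B) (hadj : G.Adj a b') : G.Adj u a := by
  obtain ⟨bu, hbu, hub⟩ := (exists_nbrs hG hS1 hS2 ha0 hb0 h0 hu).2
  have huA : u ∉ A := fun h => hu.1 (Or.inl h)
  have huB : u ∉ B := fun h => hu.1 (Or.inr h)
  exact adj_front hG hS2 huB huA hbu hub.symm ha hb' hadj.symm

lemma adj_front_B (hG : G.Connected) (hS1 : A = presat G A B) (hS2 : B = presat G B A)
    {a0 b0 : V} (ha0 : a0 ∈ A) (hb0 : b0 ∈ B) (h0 : G.Adj a0 b0)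
    {u : V} (hu : u ∈ nbhd G (A ∪ B))
    {b : V} (hb : b ∈ B) {a' : V} (ha' : a' ∈ A) (hadj : G.Adj a' b) : G.Adj u b := by
  obtain ⟨au, hau, hua⟩ := (exists_nbrs hG hS1 hS2 ha0 hb0 h0 hu).1
  have huA : u ∉ A := fun h => hu.1 (Or.inl h)
  have huB : u ∉ B := fun h => hu.1 (Or.inr h)
  exact adj_front hG hS1 huA huB hau hua.symm hb ha' hadj

lemma claimN (hG : G.Connected) (hS1 : A = presat G A B) (hS2 : B = presat G B A)
    (hd : Disjoint A B)
    {a0 b0 : V} (ha0 : a0 ∈ A) (hb0 : b0 ∈ B) (h0 : G.Adj a0 b0)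
    {u u' : V} (hu : u ∈ nbhd G (A ∪ B)) (hu' : u' ∈ nbhd G (A ∪ B))
    (hne : u ≠ u') (hnadj : ¬ G.Adj u u')
    {a : V} (ha : a ∈ A) (hau : G.Adj a u) : G.Adj a u' := by
  by_cases hfr : ∃ b ∈ B, G.Adj a b
  · obtain ⟨b, hb, hab⟩ := hfr
    exact (adj_front_A hG hS1 hS2 ha0 hb0 h0 hu' ha hb hab).symm
  · by_contra hnau'
    push_neg at hfr
    have h2 : G.Adj u b0 := adj_front_B hG hS1 hS2 ha0 hb0 h0 hu hb0 ha0 h0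
    have h3 : G.Adj b0 u' := (adj_front_B hG hS1 hS2 ha0 hb0 h0 hu' hb0 ha0 h0).symm
    have hab0 : a ≠ b0 := fun h => Set.disjoint_left.1 hd ha (h ▸ hb0)
    have hau' : a ≠ u' := fun h => hu'.1 (Or.inl (h ▸ ha))
    have hb0mem : b0 ∈ mInterval G a u' :=
      mem_mInterval_path4 hau h2 h3 (fun h => hfr b0 hb0 h) hnau' hnadj hab0 hau' hne
    have hmem : b0 ∈ mHull G (A ∪ {u'}) :=
      mConvex_mHull a (subset_mHull (Or.inl ha)) u' (subset_mHull (Or.inr rfl)) hb0mem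
    exact hull_add_disjointB hS2 (fun h => hu'.1 (Or.inr h)) hmem hb0


lemma pair_hull_subset (hG : G.Connected) (hS1 : A = presat G A B) (hS2 : B = presat G B A)
    {a0 b0 : V} (ha0 : a0 ∈ A) (hb0 : b0 ∈ B) (h0 : G.Adj a0 b0)
    {x y : V} (hx : x ∈ nbhd G (A ∪ B)) (hy : y ∈ nbhd G (A ∪ B))
    (hne : x ≠ y) (hnadj : ¬ G.Adj x y) :
    mHull G (A ∪ {x}) ∩ mHull G (A ∪ {y}) ⊆ A := by
  have hmfs : ({x, y} : Set V) ∈ MFS G A B := by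
    constructor
    · refine ⟨?_, ⟨a0, ?_, ha0⟩, ⟨b0, ?_, hb0⟩⟩
      · rintro t (rfl | rfl)
        exacts [hx.1, hy.1]
      · have h1 : G.Adj x a0 := adj_front_A hG hS1 hS2 ha0 hb0 h0 hx ha0 hb0 h0
        have h2 : G.Adj a0 y := (adj_front_A hG hS1 hS2 ha0 hb0 h0 hy ha0 hb0 h0).symm
        have hmem := mem_mInterval_path3 h1 h2 hnadj hne
        exact mConvex_mHull x (subset_mHull (Or.inl rfl)) y
          (subset_mHull (Or.inr rfl)) hmem
      · have h1 : G.Adj x b0 := adj_front_B hG hS1 hS2 ha0 hb0 h0 hx hb0 ha0 h0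
        have h2 : G.Adj b0 y := (adj_front_B hG hS1 hS2 ha0 hb0 h0 hy hb0 ha0 h0).symm
        have hmem := mem_mInterval_path3 h1 h2 hnadj hne
        exact mConvex_mHull x (subset_mHull (Or.inl rfl)) y
          (subset_mHull (Or.inr rfl)) hmem
    · rintro Y hY ⟨hYsub, ⟨wa, hwa, hwaA⟩, -⟩
      by_cases hxY : x ∈ Y
      · by_cases hyY : y ∈ Y
        · exact hY.ne (Set.Subset.antisymm hY.subset
            (by rintro t (rfl | rfl); exacts [hxY, hyY]))
        · have hsub : Y ⊆ {x} := by
            intro t ht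
            rcases hY.subset ht with rfl | rfl
            · rfl
            · exact absurd ht hyY
          have : wa = x := mHull_subset_of mConvex_singleton hsub hwa
          exact hx.1 (Or.inl (this ▸ hwaA))
      · by_cases hyY : y ∈ Y
        · have hsub : Y ⊆ {y} := by
            intro t ht
            rcases hY.subset ht with rfl | rfl
            · exact absurd ht hxY
            · rfl
          have : wa = y := mHull_subset_of mConvex_singleton hsub hwa
          exact hy.1 (Or.inl (this ▸ hwaA))
        · have hsub : Y ⊆ (∅ : Set V) := by
            intro t ht
            rcases hY.subset ht with rfl | rfl
            · exact absurd ht hxY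
            · exact absurd ht hyY
          exact mHull_subset_of mConvex_empty hsub hwa
  intro w hw
  rw [hS1]
  refine subset_mHull (Or.inr ?_)
  refine Set.mem_biUnion hmfs ?_
  refine Set.mem_biInter ?_
  rintro t (rfl | rfl)
  exacts [hw.1, hw.2]

lemma key (hG : G.Connected) (hS1 : A = presat G A B) (hS2 : B = presat G B A)
    (hd : Disjoint A B)
    {a0 b0 : V} (ha0 : a0 ∈ A) (hb0 : b0 ∈ B) (h0 : G.Adj a0 b0)
    (hnc : ¬ IsClique G (nbhd G (A ∪ B)))
    {v z a' : V} (hv : v ∈ nbhd G (A ∪ B)) (hzH : z ∈ mHull G (A ∪ {v}))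
    (hzAB : z ∉ A ∪ B)
    (ha' : a' ∈ A) (haz : G.Adj a' z) (hav : ¬ G.Adj a' v) : False := by
  have hz : z ∈ nbhd G (A ∪ B) := ⟨hzAB, a', Or.inl ha', haz⟩
  have hzv : z ≠ v := fun h => hav (h ▸ haz)
  have hvA : v ∉ A := fun h => hv.1 (Or.inl h)
  have hvB : v ∉ B := fun h => hv.1 (Or.inr h)
  have hzA : z ∉ A := fun h => hzAB (Or.inl h)
  have ha'v : a' ≠ v := fun h => hvA (h ▸ ha')
  -- z belongs to the hull of A ∪ {u} whenever a', z, u is an induced path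
  have hz_mem : ∀ u : V, u ∉ A → G.Adj z u → ¬ G.Adj a' u →
      z ∈ mHull G (A ∪ {u}) := by
    intro u huA hzu hau
    have ha'u : a' ≠ u := fun h => huA (h ▸ ha')
    exact mConvex_mHull a' (subset_mHull (Or.inl ha')) u (subset_mHull (Or.inr rfl))
      (mem_mInterval_path3 haz hzu hau ha'u)
  by_cases hcase : ∃ u ∈ nbhd G (A ∪ B), u ≠ v ∧ ¬ G.Adj u v
  · obtain ⟨u, hu, hunev, hunadj⟩ := hcase
    have hnau : ¬ G.Adj a' u := fun h =>
      hav (claimN hG hS1 hS2 hd ha0 hb0 h0 hu hv hunev hunadj ha' h)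
    by_cases hzu : z = u
    · -- pair (v, u = z)
      subst hzu
      exact hzA (pair_hull_subset hG hS1 hS2 ha0 hb0 h0 hv hu (Ne.symm hunev)
        (fun h => hunadj h.symm) ⟨hzH, subset_mHull (Or.inr rfl)⟩)
    · by_cases hadjzu : G.Adj z u
      · have huA : u ∉ A := fun h => hu.1 (Or.inl h)
        have hmem2 : z ∈ mHull G (A ∪ {u}) := hz_mem u huA hadjzu hnau
        exact hzA (pair_hull_subset hG hS1 hS2 ha0 hb0 h0 hv hu (Ne.symm hunev)
          (fun h => hunadj h.symm) ⟨hzH, hmem2⟩)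
      · have := claimN hG hS1 hS2 hd ha0 hb0 h0 hz hu hzu hadjzu ha' haz
        exact hnau this
  · push_neg at hcase
    -- v is adjacent to every other vertex of the neighbourhood
    unfold IsClique at hnc
    push_neg at hnc
    obtain ⟨x, hxN, y, hyN, hxyne, hxynadj⟩ := hnc
    have hxv : x ≠ v := by
      rintro rfl
      exact hxynadj (hcase y hyN (fun h => hxyne h.symm)).symm
    have hyv : y ≠ v := by
      rintro rfl
      exact hxynadj (hcase x hxN hxyne)
    have hadjxv : G.Adj x v := hcase x hxN hxv
    have hadjyv : G.Adj y v := hcase y hyN hyv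
    by_cases hax : G.Adj a' x
    · have hay : G.Adj a' y := claimN hG hS1 hS2 hd ha0 hb0 h0 hxN hyN hxyne hxynadj ha' hax
      have hxH : x ∈ mHull G (A ∪ {v}) :=
        mConvex_mHull a' (subset_mHull (Or.inl ha')) v (subset_mHull (Or.inr rfl))
          (mem_mInterval_path3 hax hadjxv hav ha'v)
      have hyH : y ∈ mHull G (A ∪ {v}) :=
        mConvex_mHull a' (subset_mHull (Or.inl ha')) v (subset_mHull (Or.inr rfl))
          (mem_mInterval_path3 hay hadjyv hav ha'v)
      have h1 : G.Adj x b0 := adj_front_B hG hS1 hS2 ha0 hb0 h0 hxN hb0 ha0 h0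
      have h2 : G.Adj b0 y := (adj_front_B hG hS1 hS2 ha0 hb0 h0 hyN hb0 ha0 h0).symm
      have hb0H : b0 ∈ mHull G (A ∪ {v}) :=
        mConvex_mHull x hxH y hyH (mem_mInterval_path3 h1 h2 hxynadj hxyne)
      exact hull_add_disjointB hS2 hvB hb0H hb0
    · have hay : ¬ G.Adj a' y := fun h =>
        hax (claimN hG hS1 hS2 hd ha0 hb0 h0 hyN hxN (Ne.symm hxyne)
          (fun h' => hxynadj h'.symm) ha' h)
      have hzx : z ≠ x := fun h => hax (h ▸ haz)
      have hzy : z ≠ y := fun h => hay (h ▸ haz)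
      have hadjzx : G.Adj z x := by
        by_contra hn
        exact hax (claimN hG hS1 hS2 hd ha0 hb0 h0 hz hxN hzx hn ha' haz)
      have hadjzy : G.Adj z y := by
        by_contra hn
        exact hay (claimN hG hS1 hS2 hd ha0 hb0 h0 hz hyN hzy hn ha' haz)
      have hxA : x ∉ A := fun h => hxN.1 (Or.inl h)
      have hyA : y ∉ A := fun h => hyN.1 (Or.inl h)
      have hm1 : z ∈ mHull G (A ∪ {x}) := hz_mem x hxA hadjzx hax
      have hm2 : z ∈ mHull G (A ∪ {y}) := hz_mem y hyA hadjzy hay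
      exact hzA (pair_hull_subset hG hS1 hS2 ha0 hb0 h0 hxN hyN hxyne hxynadj ⟨hm1, hm2⟩)


lemma support_subset_aux (hG : G.Connected) (hS1 : A = presat G A B) (hS2 : B = presat G B A)
    (hd : Disjoint A B)
    {a0 b0 : V} (ha0 : a0 ∈ A) (hb0 : b0 ∈ B) (h0 : G.Adj a0 b0)
    (hnc : ¬ IsClique G (nbhd G (A ∪ B)))
    {v : V} (hv : v ∈ nbhd G (A ∪ B)) :
    ∀ n : ℕ, ∀ a : V, a ∈ A → ∀ p : G.Walk a v, p.length ≤ n → p.IsPath →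
      p.toSubgraph.IsInduced → ∀ w ∈ p.support, w ∈ A ∪ {v} := by
  have hvA : v ∉ A := fun h => hv.1 (Or.inl h)
  have hvB : v ∉ B := fun h => hv.1 (Or.inr h)
  intro n
  induction n with
  | zero =>
    intro a ha p hlen hp hind w hw
    cases p with
    | nil =>
      rw [SimpleGraph.Walk.support_nil, List.mem_singleton] at hw
      exact Or.inl (hw ▸ ha)
    | cons h q => simp at hlen
  | succ n ih =>
    intro a ha p hlen hp hind w hw
    cases p with
    | nil =>
      rw [SimpleGraph.Walk.support_nil, List.mem_singleton] at hw
      exact Or.inl (hw ▸ ha)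
    | @cons _ m _ h q =>
      rw [SimpleGraph.Walk.support_cons] at hw
      rcases List.mem_cons.1 hw with rfl | hw'
      · exact Or.inl ha
      · by_cases hmA : m ∈ A
        · have hqlen : q.length ≤ n := by
            rw [SimpleGraph.Walk.length_cons] at hlen; omega
          exact ih m hmA q hqlen hp.of_cons (isInduced_tail h hp hind) w hw'
        · by_cases hmv : m = v
          · subst hmv
            have : q = SimpleGraph.Walk.nil := (SimpleGraph.Walk.isPath_iff_eq_nil (p := q)).1 hp.of_cons
            subst this
            rw [SimpleGraph.Walk.support_nil, List.mem_singleton] at hw'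
            exact Or.inr (hw' ▸ rfl)
          · exfalso
            have hmsup : m ∈ (SimpleGraph.Walk.cons h q).support := by
              rw [SimpleGraph.Walk.support_cons]
              exact List.mem_cons_of_mem _ q.start_mem_support
            have hmH : m ∈ mHull G (A ∪ {v}) :=
              mConvex_mHull a (subset_mHull (Or.inl ha)) v (subset_mHull (Or.inr rfl))
                ⟨SimpleGraph.Walk.cons h q, hp, hind, hmsup⟩
            have hmB : m ∉ B := fun hB => hull_add_disjointB hS2 hvB hmH hB
            have hnav : ¬ G.Adj a v := by
              intro hadj
              have hsadj : (SimpleGraph.Walk.cons h q).toSubgraph.Adj a v :=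
                hind ((SimpleGraph.Walk.cons h q).start_mem_verts_toSubgraph)
                  ((SimpleGraph.Walk.cons h q).end_mem_verts_toSubgraph) hadj
              have hedge : s(a, v) ∈ (SimpleGraph.Walk.cons h q).edges :=
                (((SimpleGraph.Walk.cons h q)).mem_edges_toSubgraph).1
                  (SimpleGraph.Subgraph.mem_edgeSet.2 hsadj)
              rcases List.mem_cons.1 (SimpleGraph.Walk.edges_cons h q ▸ hedge) with hc | hc
              · rw [Sym2.eq_iff] at hc
                rcases hc with ⟨-, hc⟩ | ⟨hc1, hc2⟩
                · exact hmv hc.symm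
                · exact hvA (hc2 ▸ ha)
              · exact ((SimpleGraph.Walk.cons_isPath_iff h q).1 hp).2
                  (q.fst_mem_support_of_mem_edges hc)
            exact key hG hS1 hS2 hd ha0 hb0 h0 hnc hv hmH
              (fun hm => hm.elim hmA hmB) ha h hnav

lemma hull_add_subset (hG : G.Connected) (hS1 : A = presat G A B) (hS2 : B = presat G B A)
    (hd : Disjoint A B)
    {a0 b0 : V} (ha0 : a0 ∈ A) (hb0 : b0 ∈ B) (h0 : G.Adj a0 b0)
    (hnc : ¬ IsClique G (nbhd G (A ∪ B)))
    {v : V} (hv : v ∈ nbhd G (A ∪ B)) : mHull G (A ∪ {v}) ⊆ A ∪ {v} := by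
  apply mHull_subset_of _ (subset_refl _)
  intro u1 h1 u2 h2 w hw
  rcases h1 with h1 | h1 <;> rcases h2 with h2 | h2
  · exact Or.inl (mConvex_of_sat hS1 u1 h1 u2 h2 hw)
  · rcases h2 with rfl
    obtain ⟨p, hp, hind, hwp⟩ := hw
    exact support_subset_aux hG hS1 hS2 hd ha0 hb0 h0 hnc hv p.length u1 h1 p le_rfl hp hind w hwp
  · rcases h1 with rfl
    obtain ⟨p, hp, hind, hwp⟩ := mem_mInterval_symm hw
    exact support_subset_aux hG hS1 hS2 hd ha0 hb0 h0 hnc hv p.length u2 h2 p le_rfl hp hind w hwp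
  · rcases h1 with rfl; rcases h2 with rfl
    exact Or.inr (mInterval_self hw)

lemma convex_union (hG : G.Connected) (hS1 : A = presat G A B) (hS2 : B = presat G B A)
    (hL : Linked G A B) (hd : Disjoint A B)
    (hnc : ¬ IsClique G (nbhd G (A ∪ B)))
    (K : Set V) (hK : K ⊆ nbhd G (A ∪ B)) (hKc : IsClique G K) :
    MConvex G (A ∪ K) := by
  obtain ⟨a0, ha0, b0, hb0, h0⟩ := hL
  intro u1 h1 u2 h2 w hw
  rcases h1 with h1 | h1 <;> rcases h2 with h2 | h2
  · exact Or.inl (mConvex_of_sat hS1 u1 h1 u2 h2 hw)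
  · have hwm : w ∈ mHull G (A ∪ {u2}) :=
      mConvex_mHull u1 (subset_mHull (Or.inl h1)) u2 (subset_mHull (Or.inr rfl)) hw
    rcases hull_add_subset hG hS1 hS2 hd ha0 hb0 h0 hnc (hK h2) hwm with hA | hv
    · exact Or.inl hA
    · exact Or.inr (hv ▸ h2)
  · have hwm : w ∈ mHull G (A ∪ {u1}) :=
      mConvex_mHull u2 (subset_mHull (Or.inl h2)) u1 (subset_mHull (Or.inr rfl))
        (mem_mInterval_symm hw)
    rcases hull_add_subset hG hS1 hS2 hd ha0 hb0 h0 hnc (hK h1) hwm with hA | hv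
    · exact Or.inl hA
    · exact Or.inr (hv ▸ h1)
  · by_cases he : u1 = u2
    · subst he
      exact Or.inr ((mInterval_self hw) ▸ h1)
    · rcases mInterval_adj he (hKc u1 h1 u2 h2 he) hw with rfl | rfl
      · exact Or.inr h1
      · exact Or.inr h2

end Aux

open Aux in
theorem stmt_13 [Fintype V] (G : SimpleGraph V) (hG : G.Connected)
    (A B : Set V) (hL : Linked G A B) (hd : Disjoint A B)
    (hS : Saturated G A B) (hnc : ¬ IsClique G (nbhd G (A ∪ B)))
    (K : Set V) (hK : K ⊆ nbhd G (A ∪ B)) (hKc : IsClique G K) :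
    MConvex G (A ∪ K) ∧ MConvex G (B ∪ K) := by
  obtain ⟨hS1, hS2⟩ := hS
  obtain ⟨a0, ha0, b0, hb0, h0⟩ := hL
  constructor
  · exact convex_union hG hS1 hS2 ⟨a0, ha0, b0, hb0, h0⟩ hd hnc K hK hKc
  · have hnc' : ¬ IsClique G (nbhd G (B ∪ A)) := by rwa [Set.union_comm]
    have hK' : K ⊆ nbhd G (B ∪ A) := by rwa [Set.union_comm]
    exact convex_union hG hS2 hS1 ⟨b0, hb0, a0, ha0, h0.symm⟩ hd.symm hnc' K hK' hKc
end

section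
/- Let G be a finite connected graph, and A, B linked, disjoint, saturated subsets of V(G). Let S be a connected component of G − N[A ∪ B]. Then for every v ∈ S, N(S) ⊆ cl(A ∪ {v}) ∩ cl(B ∪ {v}) ∩ N(A ∪ B). -/
open Classical

variable {V : Type*}

open Paper

namespace Aux

open SimpleGraph

lemma exists_shorter {G : SimpleGraph V} {x y a b : V} (hadj : G.Adj a b)
    (q1 : G.Walk x a) (q2 : G.Walk a y) (hne : s(a,b) ∉ (q1.append q2).edges)
    (hb : b ∈ q2.support) :
    ∃ q : G.Walk x y, q.length < (q1.append q2).length ∧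
      ∀ w ∈ q.support, w ∈ (q1.append q2).support := by
  have hne2 : s(a,b) ∉ q2.edges := fun h => hne (by
    rw [Walk.edges_append]; exact List.mem_append_right _ h)
  have hlen2 : 2 ≤ (q2.takeUntil b hb).length := by
    by_contra hlt
    push_neg at hlt
    interval_cases h0 : (q2.takeUntil b hb).length
    · exact hadj.ne (Walk.eq_of_length_eq_zero h0)
    · set w := q2.takeUntil b hb with hw
      have h1 : w.toSubgraph.Adj (w.getVert 0) (w.getVert 1) :=
        Walk.toSubgraph_adj_getVert w (by omega)
      rw [Walk.getVert_zero] at h1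
      have hgv : w.getVert 1 = b := by
        have := w.getVert_length
        rwa [h0] at this
      rw [hgv] at h1
      have : s(a,b) ∈ w.edges := (Walk.mem_edges_toSubgraph w).mp (Subgraph.mem_edgeSet.mpr h1)
      exact hne2 (Walk.edges_takeUntil_subset q2 hb this)
  refine ⟨q1.append (Walk.cons hadj (q2.dropUntil b hb)), ?_, ?_⟩
  · have hsplit : (q2.takeUntil b hb).length + (q2.dropUntil b hb).length = q2.length := by
      rw [← Walk.length_append, Walk.take_spec]
    rw [Walk.length_append, Walk.length_append, Walk.length_cons]
    omega
  · intro w hw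
    rw [Walk.mem_support_append_iff] at hw ⊢
    rcases hw with h | h
    · exact Or.inl h
    · rw [Walk.support_cons, List.mem_cons] at h
      rcases h with h | h
      · exact Or.inr (h ▸ q2.start_mem_support)
      · exact Or.inr (Walk.support_dropUntil_subset q2 hb h)

lemma exists_induced (G : SimpleGraph V) (U : Set V) {x y : V}
    (h : ∃ p : G.Walk x y, ∀ w ∈ p.support, w ∈ U) :
    ∃ p : G.Walk x y, p.IsPath ∧ p.toSubgraph.IsInduced ∧ ∀ w ∈ p.support, w ∈ U := by
  classical
  obtain ⟨p0, hp0⟩ := h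
  let Q : ℕ → Prop := fun n => ∃ p : G.Walk x y, p.length = n ∧ ∀ w ∈ p.support, w ∈ U
  have hQ : ∃ n, Q n := ⟨p0.length, p0, rfl, hp0⟩
  obtain ⟨p1, hlen1, hsupp1⟩ := Nat.find_spec hQ
  have hmin0 : ∀ q : G.Walk x y, (∀ w ∈ q.support, w ∈ U) → Nat.find hQ ≤ q.length :=
    fun q hq => Nat.find_min' hQ ⟨q, rfl, hq⟩
  set p := p1.bypass with hp
  have hsupp : ∀ w ∈ p.support, w ∈ U := fun w hw => hsupp1 w (p1.support_bypass_subset hw)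
  have hmin : ∀ q : G.Walk x y, (∀ w ∈ q.support, w ∈ U) → p.length ≤ q.length := by
    intro q hq
    calc p.length ≤ p1.length := p1.length_bypass_le
    _ = Nat.find hQ := hlen1
    _ ≤ q.length := hmin0 q hq
  refine ⟨p, p1.bypass_isPath, ?_, hsupp⟩
  intro a ha b hb hadj
  rw [Walk.mem_verts_toSubgraph] at ha hb
  by_contra hnadj
  have hne : s(a,b) ∉ p.edges := fun he =>
    hnadj (Subgraph.mem_edgeSet.mp ((Walk.mem_edges_toSubgraph p).mpr he))
  have hspec := Walk.take_spec p ha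
  by_cases hbd : b ∈ (p.dropUntil a ha).support
  · obtain ⟨q, hql, hqs⟩ := exists_shorter hadj (p.takeUntil a ha) (p.dropUntil a ha)
      (by rw [hspec]; exact hne) hbd
    rw [hspec] at hql hqs
    exact absurd (hmin q (fun w hw => hsupp w (hqs w hw))) (by omega)
  · have hbt : b ∈ (p.takeUntil a ha).support := by
      have := hb
      rw [← hspec, Walk.mem_support_append_iff] at this
      tauto
    set q1 := (p.dropUntil a ha).reverse with hq1
    set q2 := (p.takeUntil a ha).reverse with hq2
    have hrev : q1.append q2 = p.reverse := by
      rw [hq1, hq2, ← Walk.reverse_append, hspec]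
    have hb2 : b ∈ q2.support := by
      rw [hq2, Walk.support_reverse, List.mem_reverse]; exact hbt
    have hne2 : s(a,b) ∉ (q1.append q2).edges := by
      rw [hrev, Walk.edges_reverse, List.mem_reverse]; exact hne
    obtain ⟨q, hql, hqs⟩ := exists_shorter hadj q1 q2 hne2 hb2
    rw [hrev, Walk.length_reverse] at hql
    rw [hrev, Walk.support_reverse] at hqs
    have hqr : ∀ w ∈ q.reverse.support, w ∈ U := by
      intro w hw
      rw [Walk.support_reverse, List.mem_reverse] at hw
      exact hsupp w (List.mem_reverse.mp (hqs w hw))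
    have := hmin q.reverse hqr
    rw [Walk.length_reverse] at this
    omega

lemma crossing {G : SimpleGraph V} {S U : Set V} {z : V}
    (hU : ∀ w ∈ U, w = z ∨ w ∈ S ∨ ∀ s ∈ S, ¬ G.Adj s w) :
    ∀ {x y : V} (p : G.Walk x y), (∀ w ∈ p.support, w ∈ U) → x ∈ S → y ∉ S →
      z ∈ p.support := by
  intro x y p
  induction p with
  | nil => intro _ hx hy; exact absurd hx hy
  | @cons x x' y h q ih =>
    intro hsupp hx hy
    have hx'U : x' ∈ U := hsupp x' (by simp)
    rcases hU x' hx'U with rfl | hx'S | hnadj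
    · exact List.mem_cons_of_mem _ q.start_mem_support
    · exact List.mem_cons_of_mem _
        (ih (fun w hw => hsupp w (List.mem_cons_of_mem _ hw)) hx'S hy)
    · exact absurd h (hnadj x hx)

lemma walk_of_induce_conn {G : SimpleGraph V} {S : Set V} (h : (G.induce S).Connected)
    {s1 s2 : V} (h1 : s1 ∈ S) (h2 : s2 ∈ S) :
    ∃ p : G.Walk s1 s2, ∀ w ∈ p.support, w ∈ S := by
  obtain ⟨pw⟩ := h.preconnected ⟨s1, h1⟩ ⟨s2, h2⟩
  refine ⟨pw.map (SimpleGraph.Embedding.induce S).toHom, ?_⟩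
  intro w hw
  have hw2 : w ∈ (pw.map (SimpleGraph.Embedding.induce S).toHom).support := hw
  rw [Walk.support_map, List.mem_map] at hw2
  obtain ⟨u, _, rfl⟩ := hw2
  exact u.2

lemma mconvex_mHull (G : SimpleGraph V) (X : Set V) : MConvex G (mHull G X) := by
  intro u hu v hv w hw
  rw [mHull, Set.mem_sInter] at hu hv ⊢
  intro C hC
  exact hC.1 u (hu C hC) v (hv C hC) hw

lemma walk_of_convex {G : SimpleGraph V} {A : Set V} (hG : G.Connected)
    (hA : MConvex G A) {a1 a2 : V} (h1 : a1 ∈ A) (h2 : a2 ∈ A) :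
    ∃ p : G.Walk a1 a2, ∀ w ∈ p.support, w ∈ A := by
  obtain ⟨p0⟩ := hG.preconnected a1 a2
  obtain ⟨p, hpath, hind, _⟩ := exists_induced G Set.univ ⟨p0, fun _ _ => trivial⟩
  exact ⟨p, fun w hw => hA a1 h1 a2 h2 ⟨p, hpath, hind, hw⟩⟩

end Aux

open Aux SimpleGraph

theorem stmt_14 [Fintype V] (G : SimpleGraph V) (hG : G.Connected)
    (A B : Set V) (hL : Linked G A B) (hd : Disjoint A B)
    (hS : Saturated G A B)
    (S : Set V) (hcomp : IsCompOf G (cnbhd G (A ∪ B))ᶜ S)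
    (v : V) (hv : v ∈ S) :
    nbhd G S ⊆ mHull G (A ∪ {v}) ∩ mHull G (B ∪ {v}) ∩ nbhd G (A ∪ B) := by
  obtain ⟨hSne, hSsub, hSconn, hSmax⟩ := hcomp
  obtain ⟨a0, ha0, b0, hb0, hab0⟩ := hL
  have hAconv : MConvex G A := by rw [hS.1]; exact mconvex_mHull G _
  have hBconv : MConvex G B := by rw [hS.2]; exact mconvex_mHull G _
  have hnotS : ∀ w ∈ A ∪ B, w ∉ S := by
    intro w hw hwS
    exact (hSsub hwS) (Or.inl hw)
  have hnadj : ∀ w ∈ A ∪ B, ∀ t ∈ S, ¬ G.Adj t w := by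
    intro w hw t ht hadj
    exact (hSsub ht) (Or.inr ⟨fun hT => hnotS t hT ht, w, hw, hadj.symm⟩)
  intro z hz
  obtain ⟨hzS, s, hsS, hsz⟩ := hz
  have hzcn : z ∈ cnbhd G (A ∪ B) := by
    by_contra hzc
    have hsub2 : S ∪ {z} ⊆ (cnbhd G (A ∪ B))ᶜ := by
      rintro t (ht | ht)
      · exact hSsub ht
      · rw [Set.mem_singleton_iff] at ht; subst ht; exact hzc
    have hconn2 : (G.induce (S ∪ {z})).Connected := by
      have key : ∀ u : ↥(S ∪ {z} : Set V),
          (G.induce (S ∪ {z})).Reachable u ⟨s, Or.inl hsS⟩ := by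
        rintro ⟨u, hu⟩
        rcases hu with hu | hu
        · have hr := hSconn.preconnected ⟨u, hu⟩ ⟨s, hsS⟩
          let f : G.induce S →g G.induce (S ∪ {z}) :=
            ⟨fun a => ⟨a.1, Or.inl a.2⟩, fun {a b} hab => hab⟩
          exact hr.map f
        · rw [Set.mem_singleton_iff] at hu; subst hu
          exact SimpleGraph.Adj.reachable (by exact hsz.symm)
      have : Nonempty ↥(S ∪ {z} : Set V) := ⟨⟨s, Or.inl hsS⟩⟩
      exact ⟨fun u w => (key u).trans (key w).symm⟩
    have heq := hSmax (S ∪ {z}) Set.subset_union_left hsub2 hconn2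
    exact hzS (heq ▸ (Or.inr rfl : z ∈ S ∪ {z}))
  have hzAB : z ∉ A ∪ B := fun h => hnadj z h s hsS hsz
  have hznb : z ∈ nbhd G (A ∪ B) := by
    rcases hzcn with h | h
    · exact absurd h hzAB
    · exact h
  obtain ⟨w, hwAB, hwz⟩ := hznb.2
  set U : Set V := S ∪ {z} ∪ A ∪ B with hU
  have hUprop : ∀ u ∈ U, u = z ∨ u ∈ S ∨ ∀ t ∈ S, ¬ G.Adj t u := by
    intro u hu
    rcases hu with ((hu | hu) | hu) | hu
    · exact Or.inr (Or.inl hu)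
    · exact Or.inl hu
    · exact Or.inr (Or.inr (hnadj u (Or.inl hu)))
    · exact Or.inr (Or.inr (hnadj u (Or.inr hu)))
  obtain ⟨w1, hw1⟩ := walk_of_induce_conn hSconn hv hsS
  have hwalkA : ∃ p : G.Walk w a0, ∀ t ∈ p.support, t ∈ A ∪ B := by
    rcases hwAB with hwA | hwB
    · obtain ⟨p, hp⟩ := walk_of_convex hG hAconv hwA ha0
      exact ⟨p, fun t ht => Or.inl (hp t ht)⟩
    · obtain ⟨p, hp⟩ := walk_of_convex hG hBconv hwB hb0
      refine ⟨p.append (Walk.cons hab0.symm Walk.nil), ?_⟩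
      intro t ht
      rw [Walk.mem_support_append_iff] at ht
      rcases ht with ht | ht
      · exact Or.inr (hp t ht)
      · rw [Walk.support_cons, List.mem_cons] at ht
        rcases ht with rfl | ht
        · exact Or.inr hb0
        · rw [Walk.support_nil, List.mem_singleton] at ht
          exact Or.inl (ht ▸ ha0)
  have hwalkB : ∃ p : G.Walk w b0, ∀ t ∈ p.support, t ∈ A ∪ B := by
    rcases hwAB with hwA | hwB
    · obtain ⟨p, hp⟩ := walk_of_convex hG hAconv hwA ha0
      refine ⟨p.append (Walk.cons hab0 Walk.nil), ?_⟩
      intro t ht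
      rw [Walk.mem_support_append_iff] at ht
      rcases ht with ht | ht
      · exact Or.inl (hp t ht)
      · rw [Walk.support_cons, List.mem_cons] at ht
        rcases ht with rfl | ht
        · exact Or.inl ha0
        · rw [Walk.support_nil, List.mem_singleton] at ht
          exact Or.inr (ht ▸ hb0)
    · obtain ⟨p, hp⟩ := walk_of_convex hG hBconv hwB hb0
      exact ⟨p, fun t ht => Or.inr (hp t ht)⟩
  obtain ⟨pA3, hpA3⟩ := hwalkA
  obtain ⟨pB3, hpB3⟩ := hwalkB
  have hsuppA : ∀ t ∈ (w1.append (Walk.cons hsz (Walk.cons hwz.symm pA3))).support, t ∈ U := by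
    intro t ht
    rw [Walk.mem_support_append_iff] at ht
    rcases ht with ht | ht
    · exact Or.inl (Or.inl (Or.inl (hw1 t ht)))
    · rw [Walk.support_cons, List.mem_cons] at ht
      rcases ht with rfl | ht
      · exact Or.inl (Or.inl (Or.inl (hw1 t w1.end_mem_support)))
      · rw [Walk.support_cons, List.mem_cons] at ht
        rcases ht with rfl | ht
        · exact Or.inl (Or.inl (Or.inr rfl))
        · rcases hpA3 t ht with h | h
          · exact Or.inl (Or.inr h)
          · exact Or.inr h
  have hsuppB : ∀ t ∈ (w1.append (Walk.cons hsz (Walk.cons hwz.symm pB3))).support, t ∈ U := by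
    intro t ht
    rw [Walk.mem_support_append_iff] at ht
    rcases ht with ht | ht
    · exact Or.inl (Or.inl (Or.inl (hw1 t ht)))
    · rw [Walk.support_cons, List.mem_cons] at ht
      rcases ht with rfl | ht
      · exact Or.inl (Or.inl (Or.inl (hw1 t w1.end_mem_support)))
      · rw [Walk.support_cons, List.mem_cons] at ht
        rcases ht with rfl | ht
        · exact Or.inl (Or.inl (Or.inr rfl))
        · rcases hpB3 t ht with h | h
          · exact Or.inl (Or.inr h)
          · exact Or.inr h
  obtain ⟨qA, hqAp, hqAi, hqAU⟩ := exists_induced G U ⟨_, hsuppA⟩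
  obtain ⟨qB, hqBp, hqBi, hqBU⟩ := exists_induced G U ⟨_, hsuppB⟩
  have hzqA : z ∈ qA.support := crossing hUprop qA hqAU hv (hnotS a0 (Or.inl ha0))
  have hzqB : z ∈ qB.support := crossing hUprop qB hqBU hv (hnotS b0 (Or.inr hb0))
  have h1 : z ∈ mHull G (A ∪ {v}) := by
    rw [mHull, Set.mem_sInter]
    intro C hC
    exact hC.1 v (hC.2 (Or.inr rfl)) a0 (hC.2 (Or.inl ha0)) ⟨qA, hqAp, hqAi, hzqA⟩
  have h2 : z ∈ mHull G (B ∪ {v}) := by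
    rw [mHull, Set.mem_sInter]
    intro C hC
    exact hC.1 v (hC.2 (Or.inr rfl)) b0 (hC.2 (Or.inl hb0)) ⟨qB, hqBp, hqBi, hzqB⟩
  exact ⟨⟨h1, h2⟩, hznb⟩
end

section
/- Let G be a finite connected graph and A, B disjoint, linked, saturated subsets of V(G) such that N(A ∪ B) is not a clique. If there exists a forbidden pair {u, v} ∈ MFS(A, B) with u ≡ v (u and v belong to a common intersecting sequence of components of G − N[A ∪ B]), then A and B are not separable by monophonic half-spaces. -/
open Classical

variable {V : Type*}

open Paper

namespace StmtAux

open Paper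

variable {V : Type*} {G : SimpleGraph V}

/-! ### List helpers -/

lemma head?_append_left {α : Type*} {l₁ : List α} (l₂ : List α) (h : l₁ ≠ []) :
    (l₁ ++ l₂).head? = l₁.head? := by
  cases l₁ <;> simp_all

lemma head?_append_cons {α : Type*} (l₁ : List α) (a : α) (t t' : List α) :
    (l₁ ++ a :: t).head? = (l₁ ++ a :: t').head? := by
  cases l₁ <;> simp

lemma getLast?_append_cons {α : Type*} (l₁ : List α) (a : α) (t : List α) :
    (l₁ ++ a :: t).getLast? = (a :: t).getLast? := by
  induction l₁ with
  | nil => rfl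
  | cons x l₁ ih =>
    rw [List.cons_append]
    rw [show ((x :: (l₁ ++ a :: t)).getLast? = (l₁ ++ a :: t).getLast?) from ?_]
    · exact ih
    · cases h : l₁ ++ a :: t with
      | nil => simp at h
      | cons y u => rw [List.getLast?_cons_cons]

lemma tail_append_left {α : Type*} {l₁ : List α} (l₂ : List α) (h : l₁ ≠ []) :
    (l₁ ++ l₂).tail = l₁.tail ++ l₂ := by
  cases l₁ <;> simp_all

lemma mem_of_getLast? {α : Type*} {l : List α} {v : α} (h : l.getLast? = some v) : v ∈ l := by
  have hne : l ≠ [] := by rintro rfl; simp at h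
  rw [List.getLast?_eq_getLast hne] at h
  exact (Option.some_injective _ h) ▸ List.getLast_mem _

lemma eq_cons_of_head? {α : Type*} {l : List α} {a : α} (h : l.head? = some a) :
    l = a :: l.tail := by
  cases l with
  | nil => simp at h
  | cons x t => simp at h; subst h; rfl

lemma exists_first_split {α : Type*} {P : α → Prop} :
    ∀ {l : List α}, (∃ x ∈ l, P x) →
      ∃ l₁ z l₂, l = l₁ ++ z :: l₂ ∧ P z ∧ ∀ x ∈ l₁, ¬ P x := by
  intro l
  induction l with
  | nil => rintro ⟨x, hx, -⟩; simp at hx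
  | cons a t ih =>
    intro h
    by_cases hPa : P a
    · exact ⟨[], a, t, rfl, hPa, by simp⟩
    · have : ∃ x ∈ t, P x := by
        obtain ⟨x, hx, hPx⟩ := h
        rcases List.mem_cons.mp hx with rfl | hx
        · exact absurd hPx hPa
        · exact ⟨x, hx, hPx⟩
      obtain ⟨l₁, z, l₂, rfl, hPz, hl₁⟩ := ih this
      refine ⟨a :: l₁, z, l₂, rfl, hPz, ?_⟩
      intro x hx
      rcases List.mem_cons.mp hx with rfl | hx
      · exact hPa
      · exact hl₁ x hx

lemma exists_dup_split {α : Type*} :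
    ∀ {l : List α}, ¬ l.Nodup → ∃ l₁ x l₂ l₃, l = l₁ ++ x :: (l₂ ++ x :: l₃) := by
  intro l
  induction l with
  | nil => intro h; exact absurd List.nodup_nil h
  | cons a t ih =>
    intro h
    by_cases hat : a ∈ t
    · obtain ⟨s, t', rfl⟩ := List.append_of_mem hat
      exact ⟨[], a, s, t', rfl⟩
    · have : ¬ t.Nodup := fun hn => h (List.nodup_cons.mpr ⟨hat, hn⟩)
      obtain ⟨l₁, x, l₂, l₃, rfl⟩ := ih this
      exact ⟨a :: l₁, x, l₂, l₃, rfl⟩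

lemma mem_mem_split {α : Type*} {l : List α} {x y : α} (hx : x ∈ l) (hy : y ∈ l)
    (hxy : x ≠ y) :
    ∃ l₁ l₂ l₃, l = l₁ ++ x :: l₂ ++ y :: l₃ ∨ l = l₁ ++ y :: l₂ ++ x :: l₃ := by
  obtain ⟨s, t, rfl⟩ := List.append_of_mem hx
  rcases List.mem_append.mp hy with hys | hyt
  · obtain ⟨s', t', rfl⟩ := List.append_of_mem hys
    exact ⟨s', t', t, Or.inr (by simp)⟩
  · rcases List.mem_cons.mp hyt with rfl | hyt
    · exact absurd rfl hxy
    · obtain ⟨s', t', rfl⟩ := List.append_of_mem hyt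
      exact ⟨s, s', t', Or.inl (by simp)⟩


/-! ### Monophonic hull basics -/

lemma subset_mHull (G : SimpleGraph V) (X : Set V) : X ⊆ mHull G X := by
  intro x hx C hC
  exact hC.2 hx

lemma mConvex_mHull (G : SimpleGraph V) (X : Set V) : MConvex G (mHull G X) := by
  intro x hx y hy w hw C hC
  exact hC.1 x (hx C hC) y (hy C hC) hw

lemma mHull_min {X C : Set V} (hXC : X ⊆ C) (hC : MConvex G C) : mHull G X ⊆ C :=
  fun _ hx => hx C ⟨hC, hXC⟩

lemma mInterval_subset_mHull {X : Set V} {x y : V} (hx : x ∈ X) (hy : y ∈ X) :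
    mInterval G x y ⊆ mHull G X :=
  (mConvex_mHull G X) x (subset_mHull G X hx) y (subset_mHull G X hy)

/-! ### Induced lists -/

def IndList (G : SimpleGraph V) (l : List V) : Prop :=
  l.Chain' G.Adj ∧ l.Nodup ∧
    ∀ (l₁ l₂ l₃ : List V) (x y : V), l = l₁ ++ x :: l₂ ++ y :: l₃ → l₂ ≠ [] → ¬ G.Adj x y

lemma exists_walk_of_chain :
    ∀ (l : List V), l.Chain' G.Adj → ∀ {u v : V},
      l.head? = some u → l.getLast? = some v → ∃ w : G.Walk u v, w.support = l := by
  intro l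
  induction l with
  | nil => intro _ u v hu _; simp at hu
  | cons x t ih =>
    intro hc u v hu hv
    have hux : u = x := by simpa using hu.symm
    subst hux
    cases t with
    | nil =>
      have : v = u := by simpa using hv.symm
      subst this
      exact ⟨SimpleGraph.Walk.nil, rfl⟩
    | cons y t' =>
      obtain ⟨hadj, hc'⟩ := List.isChain_cons_cons.mp hc
      have hv' : (y :: t').getLast? = some v := by
        rwa [List.getLast?_cons_cons] at hv
      obtain ⟨w', hw'⟩ := ih hc' (by rfl) hv'
      exact ⟨SimpleGraph.Walk.cons hadj w', by rw [SimpleGraph.Walk.support_cons, hw']⟩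

lemma toSubgraph_adj_of_support_split {x y : V} (w : G.Walk x y) :
    ∀ (l₁ l₃ : List V) (a b : V), w.support = l₁ ++ a :: b :: l₃ → w.toSubgraph.Adj a b := by
  induction w with
  | nil =>
    intro l₁ l₃ a b h
    exfalso
    have := congrArg List.length h
    simp at this
    omega
  | @cons c d e hadj p ih =>
    intro l₁ l₃ a b h
    rw [SimpleGraph.Walk.support_cons] at h
    cases l₁ with
    | nil =>
      simp only [List.nil_append] at h
      obtain ⟨rfl, h2⟩ := List.cons_eq_cons.mp h
      have hd : d = b := by
        have := congrArg List.head? h2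
        rw [p.support_eq_cons] at this
        exact Option.some_injective _ this
      subst hd
      simp only [SimpleGraph.Walk.toSubgraph, SimpleGraph.Subgraph.sup_adj]
      left
      rw [SimpleGraph.subgraphOfAdj_adj]
    | cons z l₁' =>
      obtain ⟨rfl, h2⟩ := List.cons_eq_cons.mp h
      have := ih l₁' l₃ a b h2
      simp only [SimpleGraph.Walk.toSubgraph, SimpleGraph.Subgraph.sup_adj]
      right
      exact this

lemma IndList.mem_mInterval {l : List V} (h : IndList G l) {u v : V}
    (hu : l.head? = some u) (hv : l.getLast? = some v) {w : V} (hw : w ∈ l) :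
    w ∈ mInterval G u v := by
  obtain ⟨p, hp⟩ := exists_walk_of_chain l h.1 hu hv
  refine ⟨p, ?_, ?_, by rwa [hp]⟩
  · rw [SimpleGraph.Walk.isPath_def, hp]; exact h.2.1
  · intro c hc d hd hadj
    rw [SimpleGraph.Walk.mem_verts_toSubgraph, hp] at hc hd
    obtain ⟨l₁, l₂, l₃, hsplit | hsplit⟩ := mem_mem_split hc hd hadj.ne
    · have hl₂ : l₂ = [] := by
        by_contra hne
        exact h.2.2 l₁ l₂ l₃ c d hsplit hne hadj
      subst hl₂
      exact toSubgraph_adj_of_support_split p l₁ l₃ c d (by rw [hp, hsplit]; simp)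
    · have hl₂ : l₂ = [] := by
        by_contra hne
        exact h.2.2 l₁ l₂ l₃ d c hsplit hne hadj.symm
      subst hl₂
      exact (toSubgraph_adj_of_support_split p l₁ l₃ d c (by rw [hp, hsplit]; simp)).symm

lemma IndList.reverse {l : List V} (h : IndList G l) : IndList G l.reverse := by
  obtain ⟨hc, hn, hch⟩ := h
  refine ⟨List.isChain_reverse.mpr (hc.imp fun a b hab => hab.symm), List.nodup_reverse.mpr hn, ?_⟩
  intro l₁ l₂ l₃ x y hsplit hne
  have : l = l₃.reverse ++ y :: l₂.reverse ++ x :: l₁.reverse := by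
    have := congrArg List.reverse hsplit
    simpa [List.reverse_append] using this
  intro hadj
  exact hch l₃.reverse l₂.reverse l₁.reverse y x this (by simpa using hne) hadj.symm

lemma IndList.of_append_left {l₁ l₂ : List V} (h : IndList G (l₁ ++ l₂)) : IndList G l₁ := by
  obtain ⟨hc, hn, hch⟩ := h
  refine ⟨(List.isChain_append.mp hc).1, (List.nodup_append'.mp hn).1, ?_⟩
  intro m₁ m₂ m₃ x y hsplit hne
  exact hch m₁ m₂ (m₃ ++ l₂) x y (by rw [hsplit]; simp) hne

lemma IndList.cons {l : List V} {x : V} (h : IndList G l)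
    (hadj : ∀ z ∈ l.head?, G.Adj x z) (hx : x ∉ l)
    (htail : ∀ y ∈ l.tail, ¬ G.Adj x y) : IndList G (x :: l) := by
  obtain ⟨hc, hn, hch⟩ := h
  refine ⟨List.isChain_cons.mpr ⟨hadj, hc⟩, List.nodup_cons.mpr ⟨hx, hn⟩, ?_⟩
  intro l₁ l₂ l₃ c d hsplit hne
  cases l₁ with
  | nil =>
    simp only [List.nil_append] at hsplit
    obtain ⟨rfl, h2⟩ := List.cons_eq_cons.mp hsplit
    have hd : d ∈ l.tail := by
      cases l₂ with
      | nil => exact absurd rfl hne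
      | cons e l₂' =>
        rw [h2]
        simp
    exact htail d hd
  | cons e l₁' =>
    obtain ⟨rfl, h2⟩ := List.cons_eq_cons.mp hsplit
    exact hch l₁' l₂ l₃ c d h2 hne

lemma indList_triple {x y z : V} (hxy : G.Adj x y) (hyz : G.Adj y z) (hxz : ¬ G.Adj x z)
    (hxz' : x ≠ z) : IndList G [x, y, z] := by
  have h1 : IndList G [y, z] := by
    refine ⟨List.isChain_pair.mpr hyz, by simp [hyz.ne], ?_⟩
    intro l₁ l₂ l₃ c d hsplit hne
    exfalso
    have := congrArg List.length hsplit
    simp at this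
    have : l₂.length = 0 := by omega
    exact hne (List.length_eq_zero_iff.mp this)
  refine h1.cons (by simpa using hxy) ?_ (by simpa using hxz)
  simp only [List.mem_cons, List.not_mem_nil, or_false]
  push_neg
  exact ⟨hxy.ne, hxz'⟩

lemma chain'_shortcut {α : Type*} {R : α → α → Prop} {l₁ l₂ l₃ : List α} {x y : α}
    (h : List.Chain' R (l₁ ++ x :: (l₂ ++ y :: l₃))) (hxy : R x y) :
    List.Chain' R (l₁ ++ x :: y :: l₃) := by
  obtain ⟨h1, h2, hj⟩ := List.isChain_append.mp h
  have h3 : List.Chain' R (y :: l₃) := by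
    have h4 : List.Chain' R ((x :: l₂) ++ (y :: l₃)) := by exact h2
    exact (List.isChain_append.mp h4).2.1
  refine List.isChain_append.mpr ⟨h1, ?_, ?_⟩
  · exact List.isChain_cons.mpr ⟨fun z hz => by simp at hz; subst hz; exact hxy, h3⟩
  · intro p hp q hq
    exact hj p hp q (by simpa using hq)

lemma chain'_dedup {α : Type*} {R : α → α → Prop} {l₁ l₂ l₃ : List α} {x : α}
    (h : List.Chain' R (l₁ ++ x :: (l₂ ++ x :: l₃))) :
    List.Chain' R (l₁ ++ x :: l₃) := by
  obtain ⟨h1, h2, hj⟩ := List.isChain_append.mp h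
  have h3 : List.Chain' R (x :: l₃) := by
    have h4 : List.Chain' R ((x :: l₂) ++ (x :: l₃)) := by exact h2
    exact (List.isChain_append.mp h4).2.1
  exact List.isChain_append.mpr ⟨h1, h3, fun p hp q hq => hj p hp q (by simpa using hq)⟩

lemma exists_indList :
    ∀ (n : ℕ) (l : List V), l.length ≤ n → l.Chain' G.Adj → l ≠ [] →
      ∃ m, IndList G m ∧ m.head? = l.head? ∧ m.getLast? = l.getLast? := by
  intro n
  induction n with
  | zero =>
    intro l hl _ hne
    exact absurd (List.length_eq_zero_iff.mp (Nat.le_zero.mp hl)) hne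
  | succ n ih =>
    intro l hl hc hne
    by_cases hnd : l.Nodup
    · by_cases hch : ∃ l₁ l₂ l₃ x y,
        l = l₁ ++ x :: (l₂ ++ y :: l₃) ∧ l₂ ≠ [] ∧ G.Adj x y
      · obtain ⟨l₁, l₂, l₃, x, y, rfl, hl₂, hxy⟩ := hch
        have hlen : (l₁ ++ x :: y :: l₃).length ≤ n := by
          have := List.length_pos_iff.mpr hl₂
          simp only [List.length_append, List.length_cons] at hl ⊢
          omega
        obtain ⟨m, hm, h1, h2⟩ := ih (l₁ ++ x :: y :: l₃) hlen (chain'_shortcut hc hxy)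
          (by simp)
        refine ⟨m, hm, ?_, ?_⟩
        · rw [h1, head?_append_cons l₁ x (y :: l₃) (l₂ ++ y :: l₃)]
        · rw [h2]
          have e1 : l₁ ++ x :: y :: l₃ = (l₁ ++ [x]) ++ y :: l₃ := by simp
          have e2 : l₁ ++ x :: (l₂ ++ y :: l₃) = (l₁ ++ x :: l₂) ++ y :: l₃ := by simp
          rw [e1, e2, getLast?_append_cons (l₁ ++ [x]) y l₃,
            getLast?_append_cons (l₁ ++ x :: l₂) y l₃]
      · refine ⟨l, ⟨hc, hnd, ?_⟩, rfl, rfl⟩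
        intro l₁ l₂ l₃ x y hsplit hne2 hadj
        exact hch ⟨l₁, l₂, l₃, x, y, by simpa using hsplit, hne2, hadj⟩
    · obtain ⟨l₁, x, l₂, l₃, rfl⟩ := exists_dup_split hnd
      have hlen : (l₁ ++ x :: l₃).length ≤ n := by
        simp only [List.length_append, List.length_cons] at hl ⊢
        omega
      obtain ⟨m, hm, h1, h2⟩ := ih (l₁ ++ x :: l₃) hlen
        (chain'_dedup hc) (by simp)
      refine ⟨m, hm, ?_, ?_⟩
      · rw [h1, head?_append_cons l₁ x l₃ (l₂ ++ x :: l₃)]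
      · rw [h2, getLast?_append_cons l₁ x l₃, getLast?_append_cons l₁ x (l₂ ++ x :: l₃),
          show x :: (l₂ ++ x :: l₃) = (x :: l₂) ++ x :: l₃ by simp,
          getLast?_append_cons (x :: l₂) x l₃]

lemma exists_crossing {H : Set V} :
    ∀ (l : List V), l.Chain' G.Adj → ∀ {x y : V},
      l.head? = some x → l.getLast? = some y → x ∈ H → y ∉ H →
      ∃ p ∈ l, ∃ q ∈ l, G.Adj p q ∧ p ∈ H ∧ q ∉ H := by
  intro l
  induction l with
  | nil => intro _ x y hx _ _ _; simp at hx
  | cons a t ih =>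
    intro hc x y hx hy hxH hyH
    have hax : x = a := by simpa using hx.symm
    subst hax
    cases t with
    | nil =>
      have : y = x := by simpa using hy.symm
      subst this
      exact absurd hxH hyH
    | cons c t' =>
      obtain ⟨hadj, hc'⟩ := List.isChain_cons_cons.mp hc
      by_cases hcH : c ∈ H
      · obtain ⟨p, hp, q, hq, h⟩ := ih hc' (x := c) (y := y) rfl
          (by rwa [List.getLast?_cons_cons] at hy) hcH hyH
        exact ⟨p, List.mem_cons_of_mem _ hp, q, List.mem_cons_of_mem _ hq, h⟩
      · exact ⟨x, List.mem_cons_self, c, by simp, hadj, hxH, hcH⟩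

lemma not_mem_cnbhd {X : Set V} {q : V} (h : q ∉ cnbhd G X) :
    q ∉ X ∧ ∀ x ∈ X, ¬ G.Adj x q := by
  constructor
  · exact fun hq => h (Or.inl hq)
  · intro x hx hadj
    by_cases hqX : q ∈ X
    · exact h (Or.inl hqX)
    · exact h (Or.inr ⟨hqX, x, hx, hadj⟩)


lemma crossing_lemma (hG : G.Preconnected)
    {A B H : Set V} (hH : MConvex G H) (hHc : MConvex G Hᶜ)
    (hAH : A ⊆ H) (hBH : B ⊆ Hᶜ)
    {a b : V} (ha : a ∈ A) (hb : b ∈ B) (hab : G.Adj a b)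
    (hshadow : ∀ w : V, (mHull G (B ∪ {w}) ∩ A).Nonempty → w ∈ A)
    {p q : V} (hpq : G.Adj p q) (hp : p ∈ H) (hq : q ∉ H)
    (hqn : q ∉ cnbhd G (A ∪ B)) : False := by
  obtain ⟨hqAB, hqadj⟩ := not_mem_cnbhd hqn
  have haH : a ∈ H := hAH ha
  have hbHc : b ∉ H := hBH hb
  have haq : ¬ G.Adj a q := hqadj a (Or.inl ha)
  have hap_ne : a ≠ p := fun h => haq (h ▸ hpq)
  have hpA : p ∉ A := fun h => hqadj p (Or.inl h) hpq
  -- p has no neighbour in B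
  have hpNB : ∀ b' ∈ B, ¬ G.Adj b' p := by
    intro b' hb' hbp
    have hb'q : ¬ G.Adj b' q := hqadj b' (Or.inr hb')
    have hb'p_ne : b' ≠ q := fun h => hqAB (Or.inr (h ▸ hb'))
    have h3 : IndList G [b', p, q] := indList_triple hbp hpq hb'q hb'p_ne
    have hmem : p ∈ mInterval G b' q := h3.mem_mInterval rfl rfl (by simp)
    exact (hHc b' (hBH hb') q hq hmem) hp
  -- an induced path from q to b
  obtain ⟨w₀⟩ := hG q b
  have hsupp_head : w₀.support.head? = some q := by rw [w₀.support_eq_cons]; rfl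
  have hsupp_last : w₀.support.getLast? = some b := by
    rw [List.getLast?_eq_getLast w₀.support_ne_nil]
    simp [SimpleGraph.Walk.getLast_support]
  obtain ⟨L, hindL, hLhead, hLlast⟩ := exists_indList w₀.support.length w₀.support le_rfl
    (SimpleGraph.Walk.isChain_adj_support w₀) w₀.support_ne_nil
  rw [hsupp_head] at hLhead
  rw [hsupp_last] at hLlast
  have hLsub : ∀ x ∈ L, x ∉ H := by
    intro x hx
    exact hHc q hq b hbHc (hindL.mem_mInterval hLhead hLlast hx)
  have hbL : b ∈ L := mem_of_getLast? hLlast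
  -- first neighbour of a along L
  obtain ⟨P', w', T, hLsplit, haw, hP'⟩ :=
    exists_first_split (P := fun x => G.Adj a x) ⟨b, hbL, hab⟩
  have hP'ne : P' ≠ [] := by
    rintro rfl
    rw [hLsplit] at hLhead
    simp at hLhead
    exact haq (hLhead ▸ haw)
  set R : List V := P' ++ [w'] with hR
  have hLsplit' : L = R ++ T := by rw [hLsplit, hR]; simp
  have hindR : IndList G R := by
    rw [hLsplit'] at hindL
    exact hindL.of_append_left
  have hRhead : R.head? = some q := by
    rw [hR, head?_append_left [w'] hP'ne, ← head?_append_left (w' :: T) hP'ne, ← hLsplit, hLhead]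
  have hRlast : R.getLast? = some w' := by rw [hR, List.getLast?_concat]
  have hRsubL : ∀ x ∈ R, x ∈ L := fun x hx => by
    rw [hLsplit']; exact List.mem_append_left _ hx
  have hRnotH : ∀ x ∈ R, x ∉ H := fun x hx => hLsub x (hRsubL x hx)
  have hw'R : w' ∈ R := mem_of_getLast? hRlast
  have hw'P' : w' ∉ P' := fun h => hP' w' h haw
  -- last neighbour of p along R (via reverse)
  have hindRR : IndList G R.reverse := hindR.reverse
  have hRRhead : R.reverse.head? = some w' := by rw [List.head?_reverse]; exact hRlast
  have hRRlast : R.reverse.getLast? = some q := by rw [List.getLast?_reverse]; exact hRhead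
  have hqRR : q ∈ R.reverse := mem_of_getLast? hRRlast
  obtain ⟨E', z, F', hRRsplit, hpz, hE'⟩ :=
    exists_first_split (P := fun x => G.Adj p x) ⟨q, hqRR, hpq⟩
  set inner : List V := E' ++ [z] with hinner_def
  have hinner : IndList G inner := by
    have : R.reverse = inner ++ F' := by rw [hRRsplit, hinner_def]; simp
    rw [this] at hindRR
    exact hindRR.of_append_left
  have hinner_head : inner.head? = some w' := by
    cases hE : E' with
    | nil =>
      rw [hE] at hRRsplit
      simp only [List.nil_append] at hRRsplit
      rw [hinner_def, hE]
      rw [hRRsplit] at hRRhead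
      simpa using hRRhead
    | cons e E'' =>
      have h1 : inner.head? = some e := by rw [hinner_def, hE]; rfl
      have h2 : R.reverse.head? = some e := by rw [hRRsplit, hE]; rfl
      rw [h1, ← h2, hRRhead]
  have hinner_last : inner.getLast? = some z := by rw [hinner_def, List.getLast?_concat]
  have hinner_subR : ∀ x ∈ inner, x ∈ R := by
    intro x hx
    have : x ∈ R.reverse := by
      rw [hRRsplit]
      rcases List.mem_append.mp (hinner_def ▸ hx) with h | h
      · exact List.mem_append_left _ h
      · simp at h
        subst h
        exact List.mem_append_right _ (List.mem_cons_self)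
    exact List.mem_reverse.mp this
  have hinner_ne : inner ≠ [] := by rw [hinner_def]; simp
  by_cases hap : G.Adj a p
  · -- then b -- a -- p is induced, so a ∈ hull(B ∪ {p}), hence p ∈ A
    have hba_ne : b ≠ a := fun h => hbHc (h ▸ haH)
    have hbp_ne : b ≠ p := fun h => hbHc (h ▸ hp)
    have h3 : IndList G [b, a, p] := indList_triple hab.symm hap (fun h => hpNB b hb h) hbp_ne
    have hmem : a ∈ mInterval G b p := h3.mem_mInterval rfl rfl (by simp)
    have : a ∈ mHull G (B ∪ {p}) :=
      mInterval_subset_mHull (X := B ∪ {p}) (Set.mem_union_left _ hb)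
        (Set.mem_union_right _ rfl) hmem
    exact hpA (hshadow p ⟨a, this, ha⟩)
  · -- build the induced path a :: inner ++ [p] from a to p through w' ∉ H
    have hpinner : p ∉ inner := fun h => hRnotH p (hinner_subR p h) hp
    have hainner : a ∉ inner := fun h => hRnotH a (hinner_subR a h) haH
    have hstep1 : IndList G (p :: inner.reverse) := by
      refine hinner.reverse.cons ?_ (by simpa using hpinner) ?_
      · intro c hc
        rw [List.head?_reverse, hinner_last] at hc
        simp at hc
        subst hc
        exact hpz
      · intro y hy
        have hy' : y ∈ E'.reverse := by simpa [hinner_def] using hy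
        exact hE' y (List.mem_reverse.mp hy')
    have hstep2 : IndList G (inner ++ [p]) := by
      have := hstep1.reverse
      simpa using this
    have hM3 : IndList G (a :: (inner ++ [p])) := by
      refine hstep2.cons ?_ ?_ ?_
      · intro c hc
        rw [head?_append_left [p] hinner_ne, hinner_head] at hc
        simp at hc
        subst hc
        exact haw
      · intro h
        rcases List.mem_append.mp h with h | h
        · exact hainner h
        · simp at h
          exact hap_ne h
      · intro y hy
        rw [tail_append_left [p] hinner_ne] at hy
        rcases List.mem_append.mp hy with h | h
        · -- y is in inner.tail, hence in P', hence not adjacent to a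
          have hcons : inner = w' :: inner.tail := eq_cons_of_head? hinner_head
          have hyinner : y ∈ inner := by
            rw [hcons]
            exact List.mem_cons_of_mem _ h
          have hyR : y ∈ R := hinner_subR y hyinner
          have hyw' : y ≠ w' := by
            intro hyw
            have hnd := hinner.2.1
            rw [hcons] at hnd
            exact (List.nodup_cons.mp hnd).1 (hyw ▸ h)
          have hyP' : y ∈ P' := by
            rcases List.mem_append.mp (hR ▸ hyR) with h' | h'
            · exact h'
            · simp at h'
              exact absurd h' hyw'
          exact hP' y hyP'
        · simp at h
          subst h
          exact hap
    have hM3head : (a :: (inner ++ [p])).head? = some a := rfl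
    have hM3last : (a :: (inner ++ [p])).getLast? = some p := by
      rw [show a :: (inner ++ [p]) = (a :: inner) ++ [p] by simp, List.getLast?_concat]
    have hw'M3 : w' ∈ a :: (inner ++ [p]) := by
      refine List.mem_cons_of_mem _ (List.mem_append_left _ ?_)
      rw [eq_cons_of_head? hinner_head]
      exact List.mem_cons_self
    have : w' ∈ mInterval G a p := hM3.mem_mInterval hM3head hM3last hw'M3
    exact hRnotH w' hw'R (hH a haH p hp this)

lemma mem_of_head? {α : Type*} {l : List α} {a : α} (h : l.head? = some a) : a ∈ l := by
  rw [eq_cons_of_head? h]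
  exact List.mem_cons_self

lemma eqv_symm {A B : Set V} {u v : V} (h : Eqv G A B u v) : Eqv G A B v u := by
  rcases h with rfl | ⟨L, hne, hcomp, hchain, h1, h2⟩
  · exact Or.inl rfl
  · refine Or.inr ⟨L.reverse, by simpa using hne, ?_, ?_, ?_, ?_⟩
    · intro S hS
      exact hcomp S (List.mem_reverse.mp hS)
    · refine List.isChain_reverse.mpr (hchain.imp ?_)
      intro S T hST
      obtain ⟨z, hz⟩ := hST
      exact ⟨z, hz.2, hz.1⟩
    · rwa [List.head?_reverse]
    · rwa [List.getLast?_reverse]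

lemma core (hG : G.Preconnected)
    {A B H : Set V} (hH : MConvex G H) (hHc : MConvex G Hᶜ)
    (hAH : A ⊆ H) (hBH : B ⊆ Hᶜ)
    {a b : V} (ha : a ∈ A) (hb : b ∈ B) (hab : G.Adj a b)
    (hsh1 : ∀ w : V, (mHull G (B ∪ {w}) ∩ A).Nonempty → w ∈ A)
    (hsh2 : ∀ w : V, (mHull G (A ∪ {w}) ∩ B).Nonempty → w ∈ B)
    {u v : V} (hu : u ∈ H) (hv : v ∉ H) (heq : Eqv G A B u v) : False := by
  have hHcc : MConvex G Hᶜᶜ := by rwa [compl_compl]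
  have hAHcc : A ⊆ Hᶜᶜ := by rwa [compl_compl]
  have L4a : ∀ p q : V, G.Adj p q → p ∈ H → q ∉ H → q ∉ cnbhd G (A ∪ B) → False :=
    fun p q hpq hp hq hqn =>
      crossing_lemma hG hH hHc hAH hBH ha hb hab hsh1 hpq hp hq hqn
  have L4b : ∀ p q : V, G.Adj p q → p ∉ H → q ∈ H → q ∉ cnbhd G (A ∪ B) → False := by
    intro p q hpq hp hq hqn
    refine crossing_lemma hG hHc hHcc hBH hAHcc hb ha hab.symm hsh2 hpq hp ?_ ?_
    · simpa using hq
    · rwa [Set.union_comm]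
  rcases heq with rfl | ⟨L, hLne, hcomp, hchain, ⟨S₀, hS₀, huS₀⟩, ⟨Sₖ, hSₖ, hvSₖ⟩⟩
  · exact hv hu
  have side : ∀ S ∈ L, cnbhd G S ⊆ H ∨ cnbhd G S ⊆ Hᶜ := by
    intro S hS
    obtain ⟨hSne, hSsub, hSconn, -⟩ := hcomp S hS
    have hScn : ∀ x ∈ S, x ∉ cnbhd G (A ∪ B) := fun x hx => hSsub hx
    have hone : S ⊆ H ∨ ∀ x ∈ S, x ∉ H := by
      by_contra hcon
      push_neg at hcon
      obtain ⟨h1, s, hsS, hsH⟩ := hcon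
      obtain ⟨s', hs'S, hs'H⟩ := Set.not_subset.mp h1
      obtain ⟨W⟩ := hSconn.preconnected ⟨s, hsS⟩ ⟨s', hs'S⟩
      set l : List V := W.support.map Subtype.val with hl
      have hchainl : l.Chain' G.Adj := by
        rw [hl]
        exact (List.isChain_map _).mpr ((SimpleGraph.Walk.isChain_adj_support W).imp fun _ _ h => h)
      have hlhead : l.head? = some s := by
        rw [hl, List.head?_map, W.support_eq_cons]
        rfl
      have hllast : l.getLast? = some s' := by
        rw [hl, List.getLast?_map, List.getLast?_eq_getLast W.support_ne_nil]
        simp [SimpleGraph.Walk.getLast_support]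
      have hlS : ∀ x ∈ l, x ∈ S := by
        intro x hx
        rw [hl] at hx
        obtain ⟨⟨y, hy⟩, -, rfl⟩ := List.mem_map.mp hx
        exact hy
      obtain ⟨x, hxl, y, hyl, hxy, hxH, hyH⟩ := exists_crossing l hchainl hlhead hllast hsH hs'H
      exact L4a x y hxy hxH hyH (hScn y (hlS y hyl))
    rcases hone with hone | hone
    · left
      rintro z (hzS | ⟨hzS, s, hsS, hadj⟩)
      · exact hone hzS
      · by_contra hzH
        exact L4b z s hadj.symm hzH (hone hsS) (hScn s hsS)
    · right
      rintro z (hzS | ⟨hzS, s, hsS, hadj⟩)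
      · exact hone z hzS
      · intro hzH
        exact L4a z s hadj.symm hzH (hone s hsS) (hScn s hsS)
  have prop : ∀ M : List (Set V),
      M.Chain' (fun S T => (nbhd G S ∩ nbhd G T).Nonempty) →
      (∀ S ∈ M, cnbhd G S ⊆ H ∨ cnbhd G S ⊆ Hᶜ) →
      ∀ S₁ ∈ M.head?, cnbhd G S₁ ⊆ H → ∀ Sk ∈ M.getLast?, cnbhd G Sk ⊆ H := by
    intro M
    induction M with
    | nil => intro _ _ S₁ hS₁; simp at hS₁
    | cons S M ih =>
      intro hch hsides S₁ hS₁ hS₁H Sk hSk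
      have hS₁S : S₁ = S := by simpa using hS₁.symm
      subst hS₁S
      cases M with
      | nil =>
        have : Sk = S₁ := by simpa using hSk.symm
        subst this
        exact hS₁H
      | cons T M' =>
        obtain ⟨hrel, hch'⟩ := List.isChain_cons_cons.mp hch
        obtain ⟨z, hz1, hz2⟩ := hrel
        have hzH : z ∈ H := hS₁H (Or.inr hz1)
        have hTside : cnbhd G T ⊆ H := by
          rcases hsides T (by simp) with h | h
          · exact h
          · exact absurd (h (Or.inr hz2)) (by simpa using hzH)
        refine ih hch' (fun X hX => hsides X (List.mem_cons_of_mem _ hX)) T rfl hTside Sk ?_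
        rwa [List.getLast?_cons_cons] at hSk
  have hS₀side : cnbhd G S₀ ⊆ H := by
    rcases side S₀ (mem_of_head? hS₀) with h | h
    · exact h
    · exact absurd (h huS₀) (by simpa using hu)
  have : cnbhd G Sₖ ⊆ H :=
    prop L hchain side S₀ hS₀ hS₀side Sₖ hSₖ
  exact hv (this hvSₖ)

end StmtAux
open StmtAux in
theorem stmt_17 [Fintype V] (G : SimpleGraph V) (hG : G.Connected)
    (A B : Set V) (hL : Linked G A B) (hd : Disjoint A B)
    (hS : Saturated G A B) (hnc : ¬ IsClique G (nbhd G (A ∪ B)))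
    (u v : V) (hne : u ≠ v) (hm : ({u, v} : Set V) ∈ MFS G A B)
    (heq : Eqv G A B u v) :
    ¬ Sep G A B := by
  rintro ⟨H, hH, hHc, hAH, hBH⟩
  obtain ⟨a, ha, b, hb, hab⟩ := hL
  have hsh1 : ∀ w : V, (mHull G (B ∪ {w}) ∩ A).Nonempty → w ∈ A := by
    intro w hw
    have h1 : w ∈ shadow G A B := hw
    have h2 : shadow G A B ⊆ presat G A B :=
      (Set.subset_union_left).trans (subset_mHull _ _)
    have h3 := h2 h1
    rwa [← hS.1] at h3
  have hsh2 : ∀ w : V, (mHull G (A ∪ {w}) ∩ B).Nonempty → w ∈ B := by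
    intro w hw
    have h1 : w ∈ shadow G B A := hw
    have h2 : shadow G B A ⊆ presat G B A :=
      (Set.subset_union_left).trans (subset_mHull _ _)
    have h3 := h2 h1
    rwa [← hS.2] at h3
  obtain ⟨⟨hXsub, ⟨a', haI, haA⟩, ⟨b', hbI, hbB⟩⟩, -⟩ := hm
  have hsplit : (u ∈ H ∧ v ∉ H) ∨ (v ∈ H ∧ u ∉ H) := by
    by_cases hu : u ∈ H <;> by_cases hv : v ∈ H
    · exfalso
      have hsub : ({u, v} : Set V) ⊆ H := by
        intro x hx
        rcases hx with rfl | hx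
        · exact hu
        · rw [Set.mem_singleton_iff] at hx
          exact hx ▸ hv
      exact hBH hbB (mHull_min hsub hH hbI)
    · exact Or.inl ⟨hu, hv⟩
    · exact Or.inr ⟨hv, hu⟩
    · exfalso
      have hsub : ({u, v} : Set V) ⊆ Hᶜ := by
        intro x hx
        rcases hx with rfl | hx
        · exact hu
        · rw [Set.mem_singleton_iff] at hx
          exact hx ▸ hv
      exact (mHull_min hsub hHc haI) (hAH haA)
  rcases hsplit with ⟨hu, hv⟩ | ⟨hv, hu⟩
  · exact core hG.preconnected hH hHc hAH hBH ha hb hab hsh1 hsh2 hu hv heq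
  · exact core hG.preconnected hH hHc hAH hBH ha hb hab hsh1 hsh2 hv hu (eqv_symm heq)
end

section
/- Half-space separation is NP-hard for finite convexity spaces given by a polynomial-time hull oracle, even restricted to spaces of Carathéodory number 3. Concretely: for a 3-uniform hypergraph H with vertex set V(H), define V' = V(H) ∪ {a, b} and the closure operator h(X) = X ∪ {a, b} if X contains a hyperedge of H, and h(X) = X otherwise. Then h is a closure operator whose lattice of closed sets forms a convexity space with Carathéodory number 3, and {a} and {b} are half-space separable in this space if and only if V(H) admits a partition into two independent sets of H. -/
open Classical

theorem stmt_18 {α : Type*} [Fintype α] [DecidableEq α]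
    (E : Set (Set α)) (hE : E.Nonempty) (h3 : ∀ e ∈ E, e.ncard = 3)
    (a b : α ⊕ Bool) (ha : a = Sum.inr true) (hb : b = Sum.inr false)
    (h : Set (α ⊕ Bool) → Set (α ⊕ Bool))
    (hh : ∀ X, h X = if ∃ e ∈ E, Sum.inl '' e ⊆ X then X ∪ {a, b} else X) :
    ((∀ X, X ⊆ h X) ∧ (∀ X Y, X ⊆ Y → h X ⊆ h Y) ∧ (∀ X, h (h X) = h X)) ∧
    (h ∅ = ∅ ∧ h Set.univ = Set.univ ∧
      ∀ X Y, h X = X → h Y = Y → h (X ∩ Y) = X ∩ Y) ∧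
    ((∀ (X : Set (α ⊕ Bool)) (v : α ⊕ Bool), v ∈ h X →
        ∃ Y ⊆ X, Y.ncard ≤ 3 ∧ v ∈ h Y) ∧
      ¬ (∀ (X : Set (α ⊕ Bool)) (v : α ⊕ Bool), v ∈ h X →
        ∃ Y ⊆ X, Y.ncard ≤ 2 ∧ v ∈ h Y)) ∧
    ((∃ H : Set (α ⊕ Bool), h H = H ∧ h Hᶜ = Hᶜ ∧ a ∈ H ∧ b ∈ Hᶜ) ↔
      ∃ I J : Set α, I ∪ J = Set.univ ∧ I ∩ J = ∅ ∧
        (∀ e ∈ E, ¬ e ⊆ I) ∧ (∀ e ∈ E, ¬ e ⊆ J)) := by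
  subst ha hb
  refine ⟨⟨?_, ?_, ?_⟩, ⟨?_, ?_, ?_⟩, ⟨?_, ?_⟩, ?_, ?_⟩
  · -- extensive
    intro X
    rw [hh]
    split
    · exact Set.subset_union_left
    · rfl
  · -- monotone
    intro X Y hXY
    rw [hh X, hh Y]
    split
    · rename_i hc
      obtain ⟨e, he, hs⟩ := hc
      rw [if_pos ⟨e, he, hs.trans hXY⟩]
      exact Set.union_subset_union_left _ hXY
    · split
      · exact hXY.trans Set.subset_union_left
      · exact hXY
  · -- idempotent
    intro X
    rw [hh X]
    split
    · rename_i hc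
      obtain ⟨e, he, hs⟩ := hc
      rw [hh, if_pos ⟨e, he, hs.trans Set.subset_union_left⟩, Set.union_assoc,
        Set.union_self]
    · rename_i hc
      rw [hh, if_neg hc]
  · -- h ∅ = ∅
    rw [hh, if_neg]
    rintro ⟨e, he, hs⟩
    have hne : e.Nonempty := Set.nonempty_of_ncard_ne_zero (by rw [h3 e he]; omega)
    obtain ⟨x, hx⟩ := hne
    exact (hs (Set.mem_image_of_mem _ hx)).elim
  · -- h univ = univ
    rw [hh]
    split <;> simp
  · -- closed under intersection
    intro X Y hX hY
    rw [hh]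
    split
    · rename_i hc
      obtain ⟨e, he, hs⟩ := hc
      rw [hh, if_pos ⟨e, he, hs.trans Set.inter_subset_left⟩] at hX
      rw [hh, if_pos ⟨e, he, hs.trans Set.inter_subset_right⟩] at hY
      have hXab : {Sum.inr true, Sum.inr (false : Bool)} ⊆ X :=
        Set.union_eq_left.mp hX
      have hYab : {Sum.inr true, Sum.inr (false : Bool)} ⊆ Y :=
        Set.union_eq_left.mp hY
      exact Set.union_eq_left.mpr (Set.subset_inter hXab hYab)
    · rfl
  · -- Carathéodory ≤ 3
    intro X v hv
    by_cases hvX : v ∈ X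
    · refine ⟨{v}, Set.singleton_subset_iff.mpr hvX, by simp, ?_⟩
      rw [hh]
      split <;> simp
    · rw [hh] at hv
      split at hv
      · rename_i hc
        obtain ⟨e, he, hs⟩ := hc
        have hvab : v ∈ ({Sum.inr true, Sum.inr false} : Set (α ⊕ Bool)) :=
          hv.resolve_left hvX
        refine ⟨Sum.inl '' e, hs, ?_, ?_⟩
        · rw [Set.ncard_image_of_injective e Sum.inl_injective, h3 e he]
        · rw [hh, if_pos ⟨e, he, subset_rfl⟩]
          exact Or.inr hvab
      · exact absurd hv hvX
  · -- Carathéodory > 2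
    intro hcon
    obtain ⟨e, he⟩ := hE
    have hva : Sum.inr true ∈ h (Sum.inl '' e) := by
      rw [hh, if_pos ⟨e, he, subset_rfl⟩]
      simp
    obtain ⟨Y, hYX, hY2, hvY⟩ := hcon _ _ hva
    rw [hh] at hvY
    split at hvY
    · rename_i hc
      obtain ⟨e', he', hs⟩ := hc
      have h1 : (Sum.inl '' e').ncard ≤ Y.ncard :=
        Set.ncard_le_ncard hs (Set.toFinite Y)
      rw [Set.ncard_image_of_injective e' Sum.inl_injective, h3 e' he'] at h1
      omega
    · obtain ⟨x, _, hx⟩ := hYX hvY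
      exact Sum.inl_ne_inr hx
  · -- separation → 2-coloring
    rintro ⟨H, hHc, hHcc, haH, hbH⟩
    refine ⟨{x | Sum.inl x ∈ H}, {x | Sum.inl x ∉ H}, ?_, ?_, ?_, ?_⟩
    · ext x
      by_cases hx : Sum.inl x ∈ H <;> simp [hx]
    · ext x; simp
    · intro e he hsub
      have hs : Sum.inl '' e ⊆ H := by
        rintro _ ⟨x, hx, rfl⟩
        exact hsub hx
      rw [hh, if_pos ⟨e, he, hs⟩] at hHc
      have : Sum.inr false ∈ H ∪ {Sum.inr true, Sum.inr false} := by simp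
      rw [hHc] at this
      exact hbH this
    · intro e he hsub
      have hs : Sum.inl '' e ⊆ Hᶜ := by
        rintro _ ⟨x, hx, rfl⟩
        exact hsub hx
      rw [hh, if_pos ⟨e, he, hs⟩] at hHcc
      have : Sum.inr true ∈ Hᶜ ∪ {Sum.inr true, Sum.inr false} := by simp
      rw [hHcc] at this
      exact this haH
  · -- 2-coloring → separation
    rintro ⟨I, J, hu, hi, hI, hJ⟩
    refine ⟨Sum.inl '' I ∪ {Sum.inr true}, ?_, ?_, by simp, ?_⟩
    case _ =>
      -- h H = H
      rw [hh, if_neg]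
      rintro ⟨e, he, hs⟩
      refine hI e he fun x hx => ?_
      rcases hs (Set.mem_image_of_mem _ hx) with h1 | h1
      · obtain ⟨y, hy, hyx⟩ := h1
        exact (Sum.inl_injective hyx) ▸ hy
      · exact absurd h1 (by simp)
    all_goals
      have hcomp : (Sum.inl '' I ∪ {Sum.inr true})ᶜ = Sum.inl '' J ∪ {Sum.inr false} := by
        ext z
        cases z with
        | inl x =>
            have h1 : x ∈ I ∨ x ∈ J := by
              have := Set.eq_univ_iff_forall.mp hu x
              simpa using this
            have h2 : ¬ (x ∈ I ∧ x ∈ J) := fun ⟨hxI, hxJ⟩ =>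
              Set.eq_empty_iff_forall_notMem.mp hi x ⟨hxI, hxJ⟩
            simp only [Set.mem_compl_iff, Set.mem_union, Set.mem_image,
              Set.mem_singleton_iff]
            constructor
            · intro hx
              push_neg at hx
              refine Or.inl ⟨x, ?_, rfl⟩
              rcases h1 with h1 | h1
              · exact absurd rfl (hx.1 x h1)
              · exact h1
            · rintro (⟨y, hy, hyx⟩ | hfx)
              · obtain rfl := Sum.inl_injective hyx
                push_neg
                refine ⟨fun z hz hzx => ?_, by simp⟩
                obtain rfl := Sum.inl_injective hzx
                exact h2 ⟨hz, hy⟩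
              · exact absurd hfx (by simp)
        | inr c => cases c <;> simp
    case _ =>
      rw [hcomp, hh, if_neg]
      rintro ⟨e, he, hs⟩
      refine hJ e he fun x hx => ?_
      rcases hs (Set.mem_image_of_mem _ hx) with h1 | h1
      · obtain ⟨y, hy, hyx⟩ := h1
        exact (Sum.inl_injective hyx) ▸ hy
      · exact absurd h1 (by simp)
    case _ =>
      rw [hcomp]
      simp
end
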